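/- arXiv:0903.3959 — 7 statements merged into one kernel-verified Lean document; each statement's English description precedes it below -/
import Mathlib

section
/- Let V and M be left H-modules and let ψ: V → H be a k-linear map that is H-linear when H carries the left adjoint action, i.e. ψ(h·v) = h₁ψ(v)S(h₂) for all h ∈ H, v ∈ V. Then the k-linear map ξ: V⊗M → M defined by ξ(v⊗m) = q¹ψ(v)S(q²)·m satisfies ξ(h₁·v ⊗ h₂·m) = h·ξ(v⊗m) for all h ∈ H, v ∈ V, m ∈ M; that is, ξ is a morphism of left H-modules, where H acts on V⊗M by h·(v⊗m) = h₁·v ⊗ h₂·m. -/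
open scoped TensorProduct
open TensorProduct

structure QuasiHopf (k H : Type) [Field k] [Ring H] [Algebra k H] where
  comul : H →ₐ[k] H ⊗[k] H
  counit : H →ₐ[k] k
  counit_left : ∀ h : H,
    (TensorProduct.lid k H) ((TensorProduct.map counit.toLinearMap (LinearMap.id : H →ₗ[k] H)) (comul h)) = h
  counit_right : ∀ h : H,
    (TensorProduct.rid k H) ((TensorProduct.map (LinearMap.id : H →ₗ[k] H) counit.toLinearMap) (comul h)) = h
  phi : H ⊗[k] (H ⊗[k] H)
  phiInv : H ⊗[k] (H ⊗[k] H)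
  phi_inv : phi * phiInv = 1
  inv_phi : phiInv * phi = 1
  quasi_coassoc : ∀ h : H,
    (TensorProduct.map (LinearMap.id : H →ₗ[k] H) comul.toLinearMap) (comul h)
      = phi * ((TensorProduct.assoc k H H H)
          ((TensorProduct.map comul.toLinearMap (LinearMap.id : H →ₗ[k] H)) (comul h))) * phiInv
  pentagon :
    ((1 : H) ⊗ₜ[k] phi)
      * ((TensorProduct.map (LinearMap.id : H →ₗ[k] H)
            ((TensorProduct.assoc k H H H).toLinearMap ∘ₗ
              TensorProduct.map comul.toLinearMap (LinearMap.id : H →ₗ[k] H))) phi)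
      * ((TensorProduct.map (LinearMap.id : H →ₗ[k] H) (TensorProduct.assoc k H H H).toLinearMap)
            ((TensorProduct.assoc k H (H ⊗[k] H) H) (phi ⊗ₜ[k] (1 : H))))
    = ((TensorProduct.map (LinearMap.id : H →ₗ[k] H)
          (TensorProduct.map (LinearMap.id : H →ₗ[k] H) comul.toLinearMap)) phi)
      * ((TensorProduct.assoc k H H (H ⊗[k] H))
          ((TensorProduct.map comul.toLinearMap (LinearMap.id : H ⊗[k] H →ₗ[k] H ⊗[k] H)) phi))
  counit_phi :
    (TensorProduct.map (LinearMap.id : H →ₗ[k] H)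
        ((TensorProduct.lid k H).toLinearMap ∘ₗ
          TensorProduct.map counit.toLinearMap (LinearMap.id : H →ₗ[k] H))) phi = 1
  S : H →ₗ[k] H
  Sinv : H →ₗ[k] H
  S_mul : ∀ a b : H, S (a * b) = S b * S a
  S_one : S 1 = 1
  S_Sinv : ∀ h : H, S (Sinv h) = h
  Sinv_S : ∀ h : H, Sinv (S h) = h
  alpha : H
  beta : H
  antipode_left : ∀ (h : H) (n : ℕ) (h1 h2 : Fin n → H),
    comul h = ∑ i, h1 i ⊗ₜ[k] h2 i → ∑ i, S (h1 i) * alpha * h2 i = counit h • alpha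
  antipode_right : ∀ (h : H) (n : ℕ) (h1 h2 : Fin n → H),
    comul h = ∑ i, h1 i ⊗ₜ[k] h2 i → ∑ i, h1 i * beta * S (h2 i) = counit h • beta
  antipode_phi : ∀ (n : ℕ) (X1 X2 X3 : Fin n → H),
    phi = ∑ i, X1 i ⊗ₜ[k] (X2 i ⊗ₜ[k] X3 i) →
      ∑ i, X1 i * beta * S (X2 i) * alpha * X3 i = 1
  antipode_phiInv : ∀ (n : ℕ) (x1 x2 x3 : Fin n → H),
    phiInv = ∑ i, x1 i ⊗ₜ[k] (x2 i ⊗ₜ[k] x3 i) →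
      ∑ i, S (x1 i) * alpha * x2 i * beta * S (x3 i) = 1

lemma tensor_exists_fin {R M N : Type*} [CommSemiring R] [AddCommMonoid M] [AddCommMonoid N]
    [Module R M] [Module R N] (t : M ⊗[R] N) :
    ∃ (n : ℕ) (a : Fin n → M) (b : Fin n → N), t = ∑ i, a i ⊗ₜ[R] b i := by
  obtain ⟨s, rfl⟩ := TensorProduct.exists_finset t
  set f : M × N → M ⊗[R] N := fun x => x.1 ⊗ₜ[R] x.2 with hf
  refine ⟨s.card, fun i => (s.equivFin.symm i).1.1, fun i => (s.equivFin.symm i).1.2, ?_⟩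
  rw [← Finset.sum_coe_sort s f]
  exact (Equiv.sum_comp s.equivFin.symm (fun x : s => f x.1)).symm

section Aux

variable {k H : Type} [Field k] [Ring H] [Algebra k H]

/-- smul-by-m as a k-linear map. -/
noncomputable def smulMap (M : Type) [AddCommGroup M] [Module k M] [Module H M]
    [IsScalarTower k H M] (m : M) : H →ₗ[k] M where
  toFun a := a • m
  map_add' a b := add_smul a b m
  map_smul' r a := smul_assoc r a m

@[simp] lemma smulMap_apply {M : Type} [AddCommGroup M] [Module k M] [Module H M]
    [IsScalarTower k H M] (m : M) (a : H) : (smulMap M m : H →ₗ[k] M) a = a • m := rfl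

/-- multiply the two legs after applying f, g. -/
noncomputable def mulT {A B : Type} [AddCommGroup A] [Module k A] [AddCommGroup B] [Module k B]
    (f : A →ₗ[k] H) (g : B →ₗ[k] H) : A ⊗[k] B →ₗ[k] H :=
  LinearMap.mul' k H ∘ₗ TensorProduct.map f g

@[simp] lemma mulT_tmul {A B : Type} [AddCommGroup A] [Module k A] [AddCommGroup B] [Module k B]
    (f : A →ₗ[k] H) (g : B →ₗ[k] H) (a : A) (b : B) :
    mulT f g (a ⊗ₜ[k] b) = f a * g b := by
  simp [mulT]

end Aux

/-- the map `ξ(v ⊗ m) = q¹ψ(v)S(q²)·m` is a morphism of left `H`-modules,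
where `q = q¹ ⊗ q² = X¹ ⊗ S⁻¹(αX³)X²` and `ψ : V → H` is `H`-linear for the left adjoint
action on `H`.  Sweedler sums and the legs of `φ` are represented by arbitrary finite
families representing the corresponding tensors. -/
theorem stmt0 {k H : Type} [Field k] [Ring H] [Algebra k H] (Q : QuasiHopf k H)
    (V M : Type) [AddCommGroup V] [Module k V] [Module H V]
    [IsScalarTower k H V] [SMulCommClass k H V]
    [AddCommGroup M] [Module k M] [Module H M]
    [IsScalarTower k H M] [SMulCommClass k H M]
    (ψ : V →ₗ[k] H)
    (hψ : ∀ (h : H) (v : V) (n : ℕ) (h1 h2 : Fin n → H),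
      Q.comul h = ∑ j, h1 j ⊗ₜ[k] h2 j →
      ψ (h • v) = ∑ j, h1 j * ψ v * Q.S (h2 j))
    (h : H) (v : V) (m : M)
    (nX : ℕ) (X1 X2 X3 : Fin nX → H)
    (hX : Q.phi = ∑ i, X1 i ⊗ₜ[k] (X2 i ⊗ₜ[k] X3 i))
    (n : ℕ) (h1 h2 : Fin n → H)
    (hh : Q.comul h = ∑ j, h1 j ⊗ₜ[k] h2 j) :
    ∑ j, ∑ i, (X1 i * ψ (h1 j • v) * Q.S (Q.Sinv (Q.alpha * X3 i) * X2 i)) • (h2 j • m)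
      = h • ∑ i, (X1 i * ψ v * Q.S (Q.Sinv (Q.alpha * X3 i) * X2 i)) • m := by
  classical
  -- the linear maps
  set Gm : H ⊗[k] H →ₗ[k] H :=
    mulT ((LinearMap.mulRight k Q.alpha) ∘ₗ Q.S) (LinearMap.id) with hGmdef
  have hGm : ∀ b c : H, Gm (b ⊗ₜ[k] c) = Q.S b * Q.alpha * c := by
    intro b c; simp [hGmdef]
  set Ad : H ⊗[k] H →ₗ[k] H :=
    mulT (LinearMap.mulRight k (ψ v)) Q.S with hAddef
  have hAd : ∀ a b : H, Ad (a ⊗ₜ[k] b) = a * ψ v * Q.S b := by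
    intro a b; simp [hAddef]
  set F : H ⊗[k] (H ⊗[k] H) →ₗ[k] M :=
    (smulMap M m) ∘ₗ mulT (LinearMap.mulRight k (ψ v)) Gm with hFdef
  have hF : ∀ (a : H) (t : H ⊗[k] H), F (a ⊗ₜ[k] t) = (a * ψ v * Gm t) • m := by
    intro a t; simp [hFdef]
  -- ψ is adjoint-equivariant, in map form
  have hψ' : ∀ g : H, ψ (g • v) = Ad (Q.comul g) := by
    intro g
    obtain ⟨nn, a, b, hab⟩ := tensor_exists_fin (Q.comul g)
    rw [hψ g v nn a b hab, hab, map_sum]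
    exact Finset.sum_congr rfl fun l _ => (hAd (a l) (b l)).symm
  -- the antipode identity in map form
  have hG : ∀ (g : H) (t : H ⊗[k] H), Gm (Q.comul g * t) = Q.counit g • Gm t := by
    intro g t
    induction t using TensorProduct.induction_on with
    | zero => rw [mul_zero, map_zero, smul_zero]
    | add x y hx hy => rw [mul_add, map_add, map_add, hx, hy, smul_add]
    | tmul b c =>
      obtain ⟨nn, a, b', hab⟩ := tensor_exists_fin (Q.comul g)
      have hanti := Q.antipode_left g nn a b' hab
      rw [hab, Finset.sum_mul, map_sum, hGm]
      have hmul : ∀ l, (a l ⊗ₜ[k] b' l) * (b ⊗ₜ[k] c) = (a l * b) ⊗ₜ[k] (b' l * c) := fun l =>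
        Algebra.TensorProduct.tmul_mul_tmul _ _ _ _
      simp only [hmul, hGm]
      calc ∑ l, Q.S (a l * b) * Q.alpha * (b' l * c)
          = ∑ l, Q.S b * (Q.S (a l) * Q.alpha * b' l) * c := by
            refine Finset.sum_congr rfl fun l _ => ?_
            rw [Q.S_mul]
            simp [mul_assoc]
        _ = Q.S b * (∑ l, Q.S (a l) * Q.alpha * b' l) * c := by
            rw [Finset.mul_sum, Finset.sum_mul]
        _ = Q.counit g • (Q.S b * Q.alpha * c) := by
            rw [hanti, mul_smul_comm, smul_mul_assoc]
  -- rewrite the S (Sinv ...) expressions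
  have hq : ∀ i : Fin nX, Q.S (Q.Sinv (Q.alpha * X3 i) * X2 i)
      = Q.S (X2 i) * (Q.alpha * X3 i) := by
    intro i; rw [Q.S_mul, Q.S_Sinv]
  -- Step A : LHS = F (phi * assoc ((comul ⊗ id) (comul h)))
  have keyA : ∀ (j : Fin n) (i : Fin nX) (t : H ⊗[k] H),
      (X1 i * Ad t * (Q.S (X2 i) * (Q.alpha * X3 i)) * h2 j) • m
        = F ((X1 i ⊗ₜ[k] (X2 i ⊗ₜ[k] X3 i))
            * (TensorProduct.assoc k H H H) (t ⊗ₜ[k] h2 j)) := by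
    intro j i t
    induction t using TensorProduct.induction_on with
    | zero =>
      rw [TensorProduct.zero_tmul, LinearEquiv.map_zero, mul_zero, map_zero, map_zero,
        mul_zero, zero_mul, zero_mul, zero_smul]
    | add x y hx hy =>
      rw [map_add, mul_add, add_mul, add_mul, add_smul, hx, hy,
        TensorProduct.add_tmul, map_add, mul_add, map_add]
    | tmul a b =>
      rw [TensorProduct.assoc_tmul, Algebra.TensorProduct.tmul_mul_tmul, hF,
        Algebra.TensorProduct.tmul_mul_tmul, hGm, hAd, Q.S_mul]
      congr 1
      simp [mul_assoc]
  have stepA :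
      ∑ j, ∑ i, (X1 i * ψ (h1 j • v) * (Q.S (X2 i) * (Q.alpha * X3 i)) * h2 j) • m
        = F (Q.phi * (TensorProduct.assoc k H H H)
            ((TensorProduct.map Q.comul.toLinearMap (LinearMap.id : H →ₗ[k] H))
              (Q.comul h))) := by
    rw [hh, hX]
    simp only [map_sum]
    rw [Finset.sum_mul, map_sum, Finset.sum_comm]
    refine Finset.sum_congr rfl fun i _ => ?_
    rw [Finset.mul_sum, map_sum]
    refine Finset.sum_congr rfl fun j _ => ?_
    rw [hψ']
    simpa using keyA j i (Q.comul (h1 j))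
  -- Step B : quasi-coassociativity
  have stepB : Q.phi * (TensorProduct.assoc k H H H)
        ((TensorProduct.map Q.comul.toLinearMap (LinearMap.id : H →ₗ[k] H)) (Q.comul h))
      = (TensorProduct.map (LinearMap.id : H →ₗ[k] H) Q.comul.toLinearMap) (Q.comul h)
        * Q.phi := by
    rw [Q.quasi_coassoc h, mul_assoc, Q.inv_phi, mul_one]
  -- Step C : evaluate F on the right-hand side
  have stepC :
      F ((TensorProduct.map (LinearMap.id : H →ₗ[k] H) Q.comul.toLinearMap) (Q.comul h)
          * Q.phi)
        = h • ∑ i, (X1 i * ψ v * (Q.S (X2 i) * (Q.alpha * X3 i))) • m := by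
    have hcu : ∑ j, Q.counit (h2 j) • h1 j = h := by
      have hc := Q.counit_right h
      rw [hh] at hc
      simp only [map_sum] at hc
      simpa [TensorProduct.rid_tmul] using hc
    rw [hh, hX]
    simp only [map_sum]
    rw [Finset.sum_mul, map_sum]
    have key : ∀ j : Fin n,
        F (((TensorProduct.map (LinearMap.id : H →ₗ[k] H) Q.comul.toLinearMap)
              (h1 j ⊗ₜ[k] h2 j)) * ∑ i, X1 i ⊗ₜ[k] (X2 i ⊗ₜ[k] X3 i))
          = Q.counit (h2 j) • ∑ i, (h1 j * (X1 i * ψ v * (Q.S (X2 i) * (Q.alpha * X3 i)))) • m := by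
      intro j
      rw [TensorProduct.map_tmul, Finset.mul_sum, map_sum, Finset.smul_sum]
      refine Finset.sum_congr rfl fun i _ => ?_
      rw [Algebra.TensorProduct.tmul_mul_tmul, hF]
      simp only [LinearMap.id_coe, id_eq, AlgHom.toLinearMap_apply]
      rw [hG, hGm, mul_smul_comm, smul_assoc]
      congr 2
      simp [mul_assoc]
    calc ∑ j, F (((TensorProduct.map (LinearMap.id : H →ₗ[k] H) Q.comul.toLinearMap)
              (h1 j ⊗ₜ[k] h2 j)) * ∑ i, X1 i ⊗ₜ[k] (X2 i ⊗ₜ[k] X3 i))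
        = ∑ j, Q.counit (h2 j) • ∑ i, (h1 j * (X1 i * ψ v * (Q.S (X2 i) * (Q.alpha * X3 i)))) • m :=
          Finset.sum_congr rfl fun j _ => key j
      _ = ∑ j, ∑ i, ((Q.counit (h2 j) • h1 j) * (X1 i * ψ v * (Q.S (X2 i) * (Q.alpha * X3 i)))) • m := by
          refine Finset.sum_congr rfl fun j _ => ?_
          rw [Finset.smul_sum]
          refine Finset.sum_congr rfl fun i _ => ?_
          rw [smul_mul_assoc, smul_assoc]
      _ = ∑ i, ∑ j, ((Q.counit (h2 j) • h1 j) * (X1 i * ψ v * (Q.S (X2 i) * (Q.alpha * X3 i)))) • m :=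
          Finset.sum_comm
      _ = h • ∑ i, (X1 i * ψ v * (Q.S (X2 i) * (Q.alpha * X3 i))) • m := by
          rw [Finset.smul_sum]
          refine Finset.sum_congr rfl fun i _ => ?_
          rw [← Finset.sum_smul, ← Finset.sum_mul, hcu, mul_smul]
  -- assemble
  simp only [hq, smul_smul]
  rw [stepA, stepB, stepC]
end

section
/- For all b, b′ ∈ H the following identity holds in H: Q¹(X¹p¹₁▷b)·S(Q²)·q¹(X²p¹₂▷b′)·S(q²)·X³p² = q¹(x¹▷b)·S(q²)·x²b′S(x³), where Q¹⊗Q² denotes a second copy of q and Δ(p¹) = p¹₁⊗p¹₂. (This is the computation identifying the reconstructed transmuted multiplication of the braided group H̲ with the closed formula b ·̲ b′ = q¹(x¹▷b)S(q²)x²b′S(x³).) -/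
open scoped TensorProduct
open TensorProduct

section StmtAux
set_option maxHeartbeats 1000000
set_option synthInstance.maxHeartbeats 400000

open TensorProduct

theorem QH.exists_fin_rep {k : Type} [Field k] {M N : Type} [AddCommGroup M] [Module k M]
    [AddCommGroup N] [Module k N] (x : M ⊗[k] N) :
    ∃ (n : ℕ) (f : Fin n → M) (g : Fin n → N), x = ∑ i, f i ⊗ₜ[k] g i := by
  obtain ⟨s, hs⟩ := TensorProduct.exists_finset x
  refine ⟨s.card, fun i => (s.equivFin.symm i).1.1, fun i => (s.equivFin.symm i).1.2, ?_⟩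
  rw [hs, ← Finset.sum_attach s (fun p => p.1 ⊗ₜ[k] p.2)]
  exact (Equiv.sum_comp s.equivFin.symm (fun p => (p : M × N).1 ⊗ₜ[k] (p : M × N).2)).symm

namespace QuasiHopf

variable {k H : Type} [Field k] [Ring H] [Algebra k H] (Q : QuasiHopf k H)

/-- `adl c (u ⊗ w) = u * c * S w` -/
noncomputable def adl (c : H) : H ⊗[k] H →ₗ[k] H :=
  (LinearMap.mul' k H) ∘ₗ (TensorProduct.map (LinearMap.mulRight k c) Q.S)

@[simp] lemma adl_tmul (c u w : H) : Q.adl c (u ⊗ₜ[k] w) = u * c * Q.S w := rfl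

/-- `act c u = u ▷ c` (left adjoint action). -/
noncomputable def act (c : H) : H →ₗ[k] H := Q.adl c ∘ₗ Q.comul.toLinearMap

/-- `lamAlpha (v ⊗ w) = S v * α * w` -/
noncomputable def lamAlpha : H ⊗[k] H →ₗ[k] H :=
  (LinearMap.mul' k H) ∘ₗ
    (TensorProduct.map ((LinearMap.mulRight k Q.alpha) ∘ₗ Q.S) LinearMap.id)

@[simp] lemma lamAlpha_tmul (v w : H) : Q.lamAlpha (v ⊗ₜ[k] w) = Q.S v * Q.alpha * w := rfl

/-- `Econ c (u ⊗ v ⊗ w) = (u * c) * (S v * α * w)` -/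
noncomputable def Econ (c : H) : H ⊗[k] (H ⊗[k] H) →ₗ[k] H :=
  (LinearMap.mul' k H) ∘ₗ (TensorProduct.map (LinearMap.mulRight k c) Q.lamAlpha)

@[simp] lemma Econ_tmul (c u v w : H) :
    Q.Econ c (u ⊗ₜ[k] (v ⊗ₜ[k] w)) = u * c * (Q.S v * Q.alpha * w) := rfl

lemma Econ_add (c c' : H) (t : H ⊗[k] (H ⊗[k] H)) :
    Q.Econ (c + c') t = Q.Econ c t + Q.Econ c' t := by
  induction t with
  | zero => simp
  | add x y hx hy => simp only [map_add, hx, hy]; abel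
  | tmul u vw =>
    induction vw with
    | zero => simp [tmul_zero]
    | add x y hx hy => simp only [tmul_add, map_add, hx, hy]; abel
    | tmul v w => simp [mul_add, add_mul]

lemma Econ_smul (r : k) (c : H) (t : H ⊗[k] (H ⊗[k] H)) :
    Q.Econ (r • c) t = r • Q.Econ c t := by
  induction t with
  | zero => simp
  | add x y hx hy => simp only [map_add, hx, hy, smul_add]
  | tmul u vw =>
    induction vw with
    | zero => simp [tmul_zero]
    | add x y hx hy => simp only [tmul_add, map_add, hx, hy, smul_add]
    | tmul v w => simp [Algebra.mul_smul_comm, Algebra.smul_mul_assoc]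

/-- `EL c = q¹ c S(q²) = ∑ X¹ c S(X²) α X³`. -/
noncomputable def EL : H →ₗ[k] H where
  toFun c := Q.Econ c Q.phi
  map_add' c c' := Q.Econ_add c c' Q.phi
  map_smul' r c := Q.Econ_smul r c Q.phi

lemma EL_def (c : H) : Q.EL c = Q.Econ c Q.phi := rfl

/-- `nu (w ⊗ t) = w * β * S t` -/
noncomputable def nu : H ⊗[k] H →ₗ[k] H :=
  (LinearMap.mul' k H) ∘ₗ (TensorProduct.map (LinearMap.mulRight k Q.beta) Q.S)

@[simp] lemma nu_tmul (w t : H) : Q.nu (w ⊗ₜ[k] t) = w * Q.beta * Q.S t := rfl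

/-- The 4-fold contraction `u ⊗ v ⊗ w ⊗ t ↦ g(u ⊗ v) * (w β S t)`. -/
noncomputable def Gam (g : H ⊗[k] H →ₗ[k] H) : H ⊗[k] (H ⊗[k] (H ⊗[k] H)) →ₗ[k] H :=
  (LinearMap.mul' k H) ∘ₗ (TensorProduct.map g Q.nu) ∘ₗ
    (TensorProduct.assoc k H H (H ⊗[k] H)).symm.toLinearMap

@[simp] lemma Gam_tmul (g : H ⊗[k] H →ₗ[k] H) (u v w t : H) :
    Q.Gam g (u ⊗ₜ[k] (v ⊗ₜ[k] (w ⊗ₜ[k] t))) = g (u ⊗ₜ[k] v) * (w * Q.beta * Q.S t) := by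
  simp [Gam]

/-- `Dmap (u ⊗ w) = u₁ ⊗ (u₂ ⊗ w)` -/
noncomputable def Dmap : H ⊗[k] H →ₐ[k] H ⊗[k] (H ⊗[k] H) :=
  (Algebra.TensorProduct.assoc k k k H H H).toAlgHom.comp
    (Algebra.TensorProduct.map Q.comul (AlgHom.id k H))

/-- `T2a (u ⊗ w) = u ⊗ w₁ ⊗ w₂` -/
noncomputable def T2a : H ⊗[k] H →ₐ[k] H ⊗[k] (H ⊗[k] H) :=
  Algebra.TensorProduct.map (AlgHom.id k H) Q.comul

/-- `Δ ⊗ id ⊗ id` -/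
noncomputable def P1a : H ⊗[k] (H ⊗[k] H) →ₐ[k] H ⊗[k] (H ⊗[k] (H ⊗[k] H)) :=
  (Algebra.TensorProduct.assoc k k k H H (H ⊗[k] H)).toAlgHom.comp
    (Algebra.TensorProduct.map Q.comul (AlgHom.id k (H ⊗[k] H)))

/-- `id ⊗ Δ ⊗ id` -/
noncomputable def P2a : H ⊗[k] (H ⊗[k] H) →ₐ[k] H ⊗[k] (H ⊗[k] (H ⊗[k] H)) :=
  Algebra.TensorProduct.map (AlgHom.id k H) Q.Dmap

/-- `id ⊗ id ⊗ Δ` -/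
noncomputable def P3a : H ⊗[k] (H ⊗[k] H) →ₐ[k] H ⊗[k] (H ⊗[k] (H ⊗[k] H)) :=
  Algebra.TensorProduct.map (AlgHom.id k H)
    (Algebra.TensorProduct.map (AlgHom.id k H) Q.comul)

/-- `u ⊗ v ⊗ w ↦ u ⊗ v ⊗ w ⊗ 1` -/
noncomputable def i3a (_Q : QuasiHopf k H) : H ⊗[k] (H ⊗[k] H) →ₐ[k] H ⊗[k] (H ⊗[k] (H ⊗[k] H)) :=
  Algebra.TensorProduct.map (AlgHom.id k H)
    (Algebra.TensorProduct.map (AlgHom.id k H)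
      (Algebra.TensorProduct.includeLeft : H →ₐ[k] H ⊗[k] H))

/-- `t ↦ 1 ⊗ t` -/
noncomputable def iLa (_Q : QuasiHopf k H) : H ⊗[k] (H ⊗[k] H) →ₐ[k] H ⊗[k] (H ⊗[k] (H ⊗[k] H)) :=
  Algebra.TensorProduct.includeRight

/-- `epsL (w ⊗ t) = ε(w) • t` -/
noncomputable def epsL : H ⊗[k] H →ₐ[k] H :=
  (Algebra.TensorProduct.lid k H).toAlgHom.comp
    (Algebra.TensorProduct.map Q.counit (AlgHom.id k H))

/-- `epsR (w ⊗ t) = ε(t) • w` -/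
noncomputable def epsR : H ⊗[k] H →ₐ[k] H :=
  (Algebra.TensorProduct.rid k k H).toAlgHom.comp
    (Algebra.TensorProduct.map (AlgHom.id k H) Q.counit)

noncomputable def eps2c : H ⊗[k] (H ⊗[k] H) →ₐ[k] H ⊗[k] H :=
  Algebra.TensorProduct.map (AlgHom.id k H) Q.epsL

noncomputable def eps3c : H ⊗[k] (H ⊗[k] H) →ₐ[k] H ⊗[k] H :=
  Algebra.TensorProduct.map (AlgHom.id k H) Q.epsR

noncomputable def eps34 : H ⊗[k] (H ⊗[k] (H ⊗[k] H)) →ₐ[k] H ⊗[k] (H ⊗[k] H) :=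
  Algebra.TensorProduct.map (AlgHom.id k H)
    (Algebra.TensorProduct.map (AlgHom.id k H) Q.epsL)

@[simp] lemma Dmap_tmul (u w : H) :
    Q.Dmap (u ⊗ₜ[k] w) = (Algebra.TensorProduct.assoc k k k H H H) (Q.comul u ⊗ₜ[k] w) := rfl

@[simp] lemma T2a_tmul (u w : H) : Q.T2a (u ⊗ₜ[k] w) = u ⊗ₜ[k] Q.comul w := rfl

@[simp] lemma epsL_tmul (w t : H) : Q.epsL (w ⊗ₜ[k] t) = Q.counit w • t := by
  simp [epsL]

@[simp] lemma epsR_tmul (w t : H) : Q.epsR (w ⊗ₜ[k] t) = Q.counit t • w := by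
  simp [epsR]

end QuasiHopf

end StmtAux

section StmtAux2
set_option maxHeartbeats 1000000
set_option synthInstance.maxHeartbeats 400000
open TensorProduct
namespace QuasiHopf
variable {k H : Type} [Field k] [Ring H] [Algebra k H] (Q : QuasiHopf k H)

lemma assocA_apply3 (z : (H ⊗[k] H) ⊗[k] H) :
    (Algebra.TensorProduct.assoc k k k H H H) z = (TensorProduct.assoc k H H H) z := by
  exact congrArg (fun f => f z) (TensorProduct.AlgebraTensorModule.assoc_eq (R := k))

lemma assocA_apply4 (z : (H ⊗[k] H) ⊗[k] (H ⊗[k] H)) :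
    (Algebra.TensorProduct.assoc k k k H H (H ⊗[k] H)) z
      = (TensorProduct.assoc k H H (H ⊗[k] H)) z := by
  exact congrArg (fun f => f z) (TensorProduct.AlgebraTensorModule.assoc_eq (R := k))

lemma eqT2 (t : H ⊗[k] H) :
    (TensorProduct.map (LinearMap.id : H →ₗ[k] H) Q.comul.toLinearMap) t = Q.T2a t := by
  induction t with
  | zero => simp
  | add x y hx hy => simp only [map_add, hx, hy]
  | tmul u w => simp [T2a]

lemma eqD (t : H ⊗[k] H) :
    (TensorProduct.assoc k H H H)
      ((TensorProduct.map Q.comul.toLinearMap (LinearMap.id : H →ₗ[k] H)) t) = Q.Dmap t := by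
  induction t with
  | zero => simp
  | add x y hx hy => simp only [map_add, hx, hy]
  | tmul u w => simp [Dmap, assocA_apply3]

lemma eqP1 (t : H ⊗[k] (H ⊗[k] H)) :
    (TensorProduct.assoc k H H (H ⊗[k] H))
      ((TensorProduct.map Q.comul.toLinearMap (LinearMap.id : H ⊗[k] H →ₗ[k] H ⊗[k] H)) t)
      = Q.P1a t := by
  induction t with
  | zero => simp
  | add x y hx hy => simp only [map_add, hx, hy]
  | tmul u w => simp [P1a, assocA_apply4]

lemma eqP2 (t : H ⊗[k] (H ⊗[k] H)) :
    (TensorProduct.map (LinearMap.id : H →ₗ[k] H)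
      ((TensorProduct.assoc k H H H).toLinearMap ∘ₗ
        TensorProduct.map Q.comul.toLinearMap (LinearMap.id : H →ₗ[k] H))) t = Q.P2a t := by
  induction t with
  | zero => simp
  | add x y hx hy => simp only [map_add, hx, hy]
  | tmul u s =>
    induction s with
    | zero => simp [tmul_zero]
    | add x y hx hy => simp only [tmul_add, map_add, hx, hy]
    | tmul v w => simp [P2a, Dmap, assocA_apply3]

lemma eqP3 (t : H ⊗[k] (H ⊗[k] H)) :
    (TensorProduct.map (LinearMap.id : H →ₗ[k] H)
      (TensorProduct.map (LinearMap.id : H →ₗ[k] H) Q.comul.toLinearMap)) t = Q.P3a t := by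
  induction t with
  | zero => simp
  | add x y hx hy => simp only [map_add, hx, hy]
  | tmul u s =>
    induction s with
    | zero => simp [tmul_zero]
    | add x y hx hy => simp only [tmul_add, map_add, hx, hy]
    | tmul v w => simp [P3a]

lemma eqI3 (t : H ⊗[k] (H ⊗[k] H)) :
    (TensorProduct.map (LinearMap.id : H →ₗ[k] H) (TensorProduct.assoc k H H H).toLinearMap)
      ((TensorProduct.assoc k H (H ⊗[k] H) H) (t ⊗ₜ[k] (1 : H))) = Q.i3a t := by
  induction t with
  | zero => simp
  | add x y hx hy => simp only [add_tmul, map_add, hx, hy]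
  | tmul u s =>
    induction s with
    | zero => simp [tmul_zero, zero_tmul]
    | add x y hx hy => simp only [tmul_add, add_tmul, map_add, hx, hy]
    | tmul v w => simp [i3a]

lemma eqE2 (t : H ⊗[k] (H ⊗[k] H)) :
    (TensorProduct.map (LinearMap.id : H →ₗ[k] H)
        ((TensorProduct.lid k H).toLinearMap ∘ₗ
          TensorProduct.map Q.counit.toLinearMap (LinearMap.id : H →ₗ[k] H))) t
      = Q.eps2c t := by
  induction t with
  | zero => simp
  | add x y hx hy => simp only [map_add, hx, hy]
  | tmul u s =>
    induction s with
    | zero => simp [tmul_zero]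
    | add x y hx hy => simp only [tmul_add, map_add, hx, hy]
    | tmul v w => simp [eps2c]

lemma counit_phiA : Q.eps2c Q.phi = 1 := by
  rw [← Q.eqE2 Q.phi]
  exact Q.counit_phi

lemma pentagonA :
    Q.iLa Q.phi * Q.P2a Q.phi * Q.i3a Q.phi = Q.P3a Q.phi * Q.P1a Q.phi := by
  have := Q.pentagon
  rw [Q.eqP2, Q.eqP3, Q.eqP1, Q.eqI3] at this
  exact this

lemma qcA (h : H) :
    Q.T2a (Q.comul h) = Q.phi * Q.Dmap (Q.comul h) * Q.phiInv := by
  have := Q.quasi_coassoc h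
  rw [Q.eqT2, Q.eqD] at this
  exact this

lemma counit_right_rep (v : H) (n : ℕ) (f g : Fin n → H)
    (h : Q.comul v = ∑ i, f i ⊗ₜ[k] g i) : ∑ i, Q.counit (g i) • f i = v := by
  have hcr := Q.counit_right v
  rw [h, map_sum, map_sum] at hcr
  simpa using hcr

lemma counit_left_rep (v : H) (n : ℕ) (f g : Fin n → H)
    (h : Q.comul v = ∑ i, f i ⊗ₜ[k] g i) : ∑ i, Q.counit (f i) • g i = v := by
  have hcl := Q.counit_left v
  rw [h, map_sum, map_sum] at hcl
  simpa using hcl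

end QuasiHopf
end StmtAux2

section StmtAux3
set_option maxHeartbeats 1000000
set_option synthInstance.maxHeartbeats 400000
open TensorProduct
namespace QuasiHopf
variable {k H : Type} [Field k] [Ring H] [Algebra k H] (Q : QuasiHopf k H)

lemma algHom_phi_inv {B : Type} [Semiring B] [Algebra k B]
    (F : H ⊗[k] (H ⊗[k] H) →ₐ[k] B) : F Q.phi * F Q.phiInv = 1 := by
  rw [← map_mul, Q.phi_inv, map_one]

lemma algHom_inv_phi {B : Type} [Semiring B] [Algebra k B]
    (F : H ⊗[k] (H ⊗[k] H) →ₐ[k] B) : F Q.phiInv * F Q.phi = 1 := by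
  rw [← map_mul, Q.inv_phi, map_one]

lemma monoid_key {M : Type} [Monoid M] (a a' b b' c d e e' : M)
    (ha : a' * a = 1) (hb : b' * b = 1) (he : e * e' = 1)
    (hp : a * b * c = d * e) : c * e' = b' * (a' * d) := by
  have h1 : a * (b * (c * e')) = d := by
    rw [← mul_assoc, ← mul_assoc, hp, mul_assoc, he, mul_one]
  have h2 : b * (c * e') = a' * d := by rw [← h1, ← mul_assoc a' a, ha, one_mul]
  rw [← h2, ← mul_assoc b' b, hb, one_mul]

lemma key4 :
    Q.i3a Q.phi * Q.P1a Q.phiInv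
      = Q.P2a Q.phiInv * (Q.iLa Q.phiInv * Q.P3a Q.phi) := by
  have hp := Q.pentagonA
  have h1 : Q.iLa Q.phi * (Q.P2a Q.phi * (Q.i3a Q.phi * Q.P1a Q.phiInv)) = Q.P3a Q.phi := by
    rw [← mul_assoc (Q.P2a Q.phi) (Q.i3a Q.phi) (Q.P1a Q.phiInv),
      ← mul_assoc (Q.iLa Q.phi) (Q.P2a Q.phi * Q.i3a Q.phi) (Q.P1a Q.phiInv),
      ← mul_assoc (Q.iLa Q.phi) (Q.P2a Q.phi) (Q.i3a Q.phi), hp,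
      mul_assoc (Q.P3a Q.phi) (Q.P1a Q.phi) (Q.P1a Q.phiInv),
      Q.algHom_phi_inv Q.P1a]
    exact mul_one (M := H ⊗[k] (H ⊗[k] (H ⊗[k] H))) _
  have h2 : Q.P2a Q.phi * (Q.i3a Q.phi * Q.P1a Q.phiInv)
      = Q.iLa Q.phiInv * Q.P3a Q.phi := by
    rw [← h1, ← mul_assoc (Q.iLa Q.phiInv) (Q.iLa Q.phi)
        (Q.P2a Q.phi * (Q.i3a Q.phi * Q.P1a Q.phiInv)),
      Q.algHom_inv_phi Q.iLa]
    exact (one_mul (M := H ⊗[k] (H ⊗[k] (H ⊗[k] H))) _).symm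
  rw [← h2, ← mul_assoc (Q.P2a Q.phiInv) (Q.P2a Q.phi) (Q.i3a Q.phi * Q.P1a Q.phiInv),
    Q.algHom_inv_phi Q.P2a]
  exact (one_mul (M := H ⊗[k] (H ⊗[k] (H ⊗[k] H))) _).symm

lemma Dmap_rep (v w : H) (n : ℕ) (f g : Fin n → H) (hfg : Q.comul v = ∑ i, f i ⊗ₜ[k] g i) :
    Q.Dmap (v ⊗ₜ[k] w) = ∑ i, f i ⊗ₜ[k] (g i ⊗ₜ[k] w) := by
  rw [Q.Dmap_tmul, hfg, sum_tmul, map_sum]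
  simp only [Algebra.TensorProduct.assoc_tmul]

lemma inner_e2 (v w : H) :
    (Algebra.TensorProduct.map (AlgHom.id k H) Q.epsL) (Q.Dmap (v ⊗ₜ[k] w)) = v ⊗ₜ[k] w := by
  obtain ⟨n, f, g, hfg⟩ := QH.exists_fin_rep (Q.comul v)
  rw [Q.Dmap_rep v w n f g hfg, map_sum]
  simp only [Algebra.TensorProduct.map_tmul, AlgHom.coe_id, id_eq, epsL_tmul]
  calc (∑ i, f i ⊗ₜ[k] (Q.counit (g i) • w))
      = ∑ i, (Q.counit (g i) • f i) ⊗ₜ[k] w := by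
        refine Finset.sum_congr rfl fun i _ => ?_
        rw [smul_tmul]
    _ = (∑ i, Q.counit (g i) • f i) ⊗ₜ[k] w := by rw [sum_tmul]
    _ = v ⊗ₜ[k] w := by rw [Q.counit_right_rep v n f g hfg]

lemma e2 (t : H ⊗[k] (H ⊗[k] H)) : Q.eps34 (Q.P2a t) = t := by
  induction t with
  | zero => simp
  | add x y hx hy => simp only [map_add, hx, hy]
  | tmul u s =>
    induction s with
    | zero => simp [tmul_zero]
    | add x y hx hy => simp only [tmul_add, map_add, hx, hy]
    | tmul v w =>
      have : Q.eps34 (Q.P2a (u ⊗ₜ[k] (v ⊗ₜ[k] w)))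
          = u ⊗ₜ[k] ((Algebra.TensorProduct.map (AlgHom.id k H) Q.epsL)
              (Q.Dmap (v ⊗ₜ[k] w))) := rfl
      rw [this, Q.inner_e2]

lemma epsL_comul (w : H) : Q.epsL (Q.comul w) = w := by
  obtain ⟨n, f, g, hfg⟩ := QH.exists_fin_rep (Q.comul w)
  rw [hfg, map_sum]
  simp only [epsL_tmul]
  exact Q.counit_left_rep w n f g hfg

lemma e4 (t : H ⊗[k] (H ⊗[k] H)) : Q.eps34 (Q.P3a t) = t := by
  induction t with
  | zero => simp
  | add x y hx hy => simp only [map_add, hx, hy]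
  | tmul u s =>
    induction s with
    | zero => simp [tmul_zero]
    | add x y hx hy => simp only [tmul_add, map_add, hx, hy]
    | tmul v w =>
      have : Q.eps34 (Q.P3a (u ⊗ₜ[k] (v ⊗ₜ[k] w)))
          = u ⊗ₜ[k] (v ⊗ₜ[k] (Q.epsL (Q.comul w))) := rfl
      rw [this, Q.epsL_comul]

lemma e3 (t : H ⊗[k] (H ⊗[k] H)) :
    Q.eps34 (Q.i3a t)
      = (Algebra.TensorProduct.map (AlgHom.id k H)
          (Algebra.TensorProduct.includeLeft : H →ₐ[k] H ⊗[k] H)) (Q.eps3c t) := by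
  induction t with
  | zero => simp
  | add x y hx hy => simp only [map_add, hx, hy]
  | tmul u s =>
    induction s with
    | zero => simp [tmul_zero]
    | add x y hx hy => simp only [tmul_add, map_add, hx, hy]
    | tmul v w =>
      show u ⊗ₜ[k] (v ⊗ₜ[k] (Q.counit w • (1 : H)))
        = u ⊗ₜ[k] ((Q.counit w • v) ⊗ₜ[k] (1 : H))
      rw [smul_tmul]

lemma e5 (t : H ⊗[k] (H ⊗[k] H)) : Q.eps34 (Q.P1a t) = Q.Dmap (Q.eps2c t) := by
  induction t with
  | zero => simp
  | add x y hx hy => simp only [map_add, hx, hy]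
  | tmul u s =>
    induction s with
    | zero => simp [tmul_zero]
    | add x y hx hy => simp only [tmul_add, map_add, hx, hy]
    | tmul v w =>
      obtain ⟨n, f, g, hfg⟩ := QH.exists_fin_rep (Q.comul u)
      have h1 : Q.P1a (u ⊗ₜ[k] (v ⊗ₜ[k] w)) = ∑ i, f i ⊗ₜ[k] (g i ⊗ₜ[k] (v ⊗ₜ[k] w)) := by
        show (Algebra.TensorProduct.assoc k k k H H (H ⊗[k] H))
            (Q.comul u ⊗ₜ[k] (v ⊗ₜ[k] w)) = _
        rw [hfg, sum_tmul, map_sum]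
        simp only [Algebra.TensorProduct.assoc_tmul]
      have h2 : Q.eps2c (u ⊗ₜ[k] (v ⊗ₜ[k] w)) = u ⊗ₜ[k] (Q.counit v • w) := rfl
      rw [h1, map_sum, h2, Q.Dmap_rep u (Q.counit v • w) n f g hfg]
      rfl

lemma e6 (s : H ⊗[k] H) :
    Q.eps3c ((Algebra.TensorProduct.map (AlgHom.id k H)
      (Algebra.TensorProduct.includeLeft : H →ₐ[k] H ⊗[k] H)) s) = s := by
  induction s with
  | zero => simp
  | add x y hx hy => simp only [map_add, hx, hy]
  | tmul u v =>
    show u ⊗ₜ[k] (Q.counit 1 • v) = u ⊗ₜ[k] v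
    rw [map_one, one_smul]

lemma eps2c_phiInv : Q.eps2c Q.phiInv = 1 := by
  have h := Q.algHom_phi_inv Q.eps2c
  rw [Q.counit_phiA, one_mul] at h
  exact h

lemma eps3c_phi : Q.eps3c Q.phi = 1 := by
  have hp : Q.iLa Q.phi * Q.P2a Q.phi * Q.i3a Q.phi = Q.P3a Q.phi * Q.P1a Q.phi :=
    Q.pentagonA
  have h := congrArg Q.eps34 hp
  rw [map_mul, map_mul, map_mul, Q.e2, Q.e4, Q.e3, Q.e5, Q.counit_phiA, map_one, mul_one] at h
  have h1 : Q.eps34 (Q.iLa Q.phi) = 1 ⊗ₜ[k] Q.eps2c Q.phi := rfl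
  rw [h1, Q.counit_phiA] at h
  have h2 : (1 : H) ⊗ₜ[k] (1 : H ⊗[k] H) = (1 : H ⊗[k] (H ⊗[k] H)) := rfl
  rw [h2, one_mul] at h
  -- h : Q.phi * (map id includeLeft) (Q.eps3c Q.phi) = Q.phi
  have h3 : Q.phiInv * (Q.phi * (Algebra.TensorProduct.map (AlgHom.id k H)
      (Algebra.TensorProduct.includeLeft : H →ₐ[k] H ⊗[k] H)) (Q.eps3c Q.phi))
      = Q.phiInv * Q.phi := by rw [h]
  rw [← mul_assoc, Q.inv_phi, one_mul] at h3
  have h4 := congrArg Q.eps3c h3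
  rw [Q.e6, map_one] at h4
  exact h4

lemma C3rep (nX : ℕ) (X1 X2 X3 : Fin nX → H)
    (hX : Q.phi = ∑ i, X1 i ⊗ₜ[k] (X2 i ⊗ₜ[k] X3 i)) :
    ∑ i, Q.counit (X3 i) • (X1 i ⊗ₜ[k] X2 i) = (1 : H ⊗[k] H) := by
  have h := Q.eps3c_phi
  rw [hX, map_sum] at h
  calc ∑ i, Q.counit (X3 i) • (X1 i ⊗ₜ[k] X2 i)
      = ∑ i, Q.eps3c (X1 i ⊗ₜ[k] (X2 i ⊗ₜ[k] X3 i)) := by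
        refine Finset.sum_congr rfl fun i _ => ?_
        show _ = X1 i ⊗ₜ[k] (Q.counit (X3 i) • X2 i)
        rw [tmul_smul]
    _ = 1 := h

lemma C1rep (nx : ℕ) (x1 x2 x3 : Fin nx → H)
    (hx : Q.phiInv = ∑ i, x1 i ⊗ₜ[k] (x2 i ⊗ₜ[k] x3 i)) :
    ∑ i, Q.counit (x2 i) • (x1 i ⊗ₜ[k] x3 i) = (1 : H ⊗[k] H) := by
  have h := Q.eps2c_phiInv
  rw [hx, map_sum] at h
  calc ∑ i, Q.counit (x2 i) • (x1 i ⊗ₜ[k] x3 i)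
      = ∑ i, Q.eps2c (x1 i ⊗ₜ[k] (x2 i ⊗ₜ[k] x3 i)) := by
        refine Finset.sum_congr rfl fun i _ => ?_
        show _ = x1 i ⊗ₜ[k] (Q.counit (x2 i) • x3 i)
        rw [tmul_smul]
    _ = 1 := h

end QuasiHopf
end StmtAux3

section StmtAux4
set_option maxHeartbeats 2000000
set_option synthInstance.maxHeartbeats 400000
open TensorProduct
namespace QuasiHopf
variable {k H : Type} [Field k] [Ring H] [Algebra k H] (Q : QuasiHopf k H)

lemma act_rep (c v : H) (n : ℕ) (f g : Fin n → H)
    (h : Q.comul v = ∑ i, f i ⊗ₜ[k] g i) :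
    Q.act c v = ∑ i, f i * c * Q.S (g i) := by
  show Q.adl c (Q.comul v) = _
  rw [h, map_sum]
  simp only [adl_tmul]

lemma EL_rep (nX : ℕ) (X1 X2 X3 : Fin nX → H)
    (hX : Q.phi = ∑ i, X1 i ⊗ₜ[k] (X2 i ⊗ₜ[k] X3 i)) (c : H) :
    Q.EL c = ∑ a, X1 a * c * (Q.S (X2 a) * Q.alpha * X3 a) := by
  show Q.Econ c Q.phi = _
  rw [hX, map_sum]
  simp only [Econ_tmul]

lemma act_mul (c u v : H) : Q.act c (u * v) = Q.act (Q.act c v) u := by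
  obtain ⟨n, f, g, hu⟩ := QH.exists_fin_rep (Q.comul u)
  obtain ⟨m, p, q, hv⟩ := QH.exists_fin_rep (Q.comul v)
  have hprod : Q.comul (u * v) = ∑ i, ∑ j, (f i * p j) ⊗ₜ[k] (g i * q j) := by
    rw [map_mul, hu, hv, Finset.sum_mul_sum]
    simp only [Algebra.TensorProduct.tmul_mul_tmul]
  have h1 : Q.act c (u * v) = ∑ i, ∑ j, (f i * p j) * c * Q.S (g i * q j) := by
    show Q.adl c (Q.comul (u * v)) = _
    rw [hprod, map_sum]
    simp only [map_sum, adl_tmul]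
  rw [h1, Q.act_rep (Q.act c v) u n f g hu, Q.act_rep c v m p q hv]
  refine Finset.sum_congr rfl fun i _ => ?_
  conv_rhs => rw [Finset.mul_sum, Finset.sum_mul]
  refine Finset.sum_congr rfl fun j _ => ?_
  rw [Q.S_mul]
  simp only [mul_assoc]

lemma antipode_left_collect (h : H) (n : ℕ) (s1 s2 : Fin n → H)
    (hs : Q.comul h = ∑ i, s1 i ⊗ₜ[k] s2 i) (R : H) :
    ∑ jj, Q.S (s1 jj) * (Q.alpha * (s2 jj * R)) = Q.counit h • (Q.alpha * R) := by
  calc ∑ jj, Q.S (s1 jj) * (Q.alpha * (s2 jj * R))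
      = ∑ jj, (Q.S (s1 jj) * Q.alpha * s2 jj) * R := by
        refine Finset.sum_congr rfl fun jj _ => ?_
        simp only [mul_assoc]
    _ = (∑ jj, Q.S (s1 jj) * Q.alpha * s2 jj) * R := by rw [Finset.sum_mul]
    _ = (Q.counit h • Q.alpha) * R := by rw [Q.antipode_left h n s1 s2 hs]
    _ = Q.counit h • (Q.alpha * R) := by rw [smul_mul_assoc]

lemma antipode_right_collect (h : H) (n : ℕ) (s1 s2 : Fin n → H)
    (hs : Q.comul h = ∑ i, s1 i ⊗ₜ[k] s2 i) (R : H) :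
    ∑ jj, s1 jj * (Q.beta * (Q.S (s2 jj) * R)) = Q.counit h • (Q.beta * R) := by
  calc ∑ jj, s1 jj * (Q.beta * (Q.S (s2 jj) * R))
      = ∑ jj, (s1 jj * Q.beta * Q.S (s2 jj)) * R := by
        refine Finset.sum_congr rfl fun jj _ => ?_
        simp only [mul_assoc]
    _ = (∑ jj, s1 jj * Q.beta * Q.S (s2 jj)) * R := by rw [Finset.sum_mul]
    _ = (Q.counit h • Q.beta) * R := by rw [Q.antipode_right h n s1 s2 hs]
    _ = Q.counit h • (Q.beta * R) := by rw [smul_mul_assoc]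

/-- The fundamental intertwiner property (★):
`∑ E(h₁ ▷ c) h₂ = h E(c)`. -/
lemma star_lemma (nX : ℕ) (X1 X2 X3 : Fin nX → H)
    (hX : Q.phi = ∑ i, X1 i ⊗ₜ[k] (X2 i ⊗ₜ[k] X3 i))
    (c v : H) (n : ℕ) (m1 m2 : Fin n → H)
    (hm : Q.comul v = ∑ i, m1 i ⊗ₜ[k] m2 i) :
    ∑ i, Q.EL (Q.act c (m1 i)) * m2 i = v * Q.EL c := by
  have hT : Q.T2a (Q.comul v) * Q.phi = Q.phi * Q.Dmap (Q.comul v) := by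
    calc Q.T2a (Q.comul v) * Q.phi
        = Q.phi * Q.Dmap (Q.comul v) * Q.phiInv * Q.phi := by rw [Q.qcA v]
      _ = Q.phi * Q.Dmap (Q.comul v) * (Q.phiInv * Q.phi) :=
          mul_assoc (Q.phi * Q.Dmap (Q.comul v)) Q.phiInv Q.phi
      _ = Q.phi * Q.Dmap (Q.comul v) := by
          rw [Q.inv_phi]
          exact mul_one (M := H ⊗[k] (H ⊗[k] H)) _
  have stepA : ∑ i, Q.EL (Q.act c (m1 i)) * m2 i
      = Q.Econ c (Q.phi * Q.Dmap (Q.comul v)) := by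
    rw [hm, map_sum, Finset.mul_sum, map_sum]
    refine Finset.sum_congr rfl fun i _ => ?_
    obtain ⟨ni, r1, r2, hr⟩ := QH.exists_fin_rep (Q.comul (m1 i))
    rw [Q.Dmap_rep (m1 i) (m2 i) ni r1 r2 hr, hX, Finset.sum_mul_sum, map_sum]
    simp only [map_sum, Algebra.TensorProduct.tmul_mul_tmul, Econ_tmul]
    rw [Q.EL_rep nX X1 X2 X3 hX (Q.act c (m1 i)), Q.act_rep c (m1 i) ni r1 r2 hr,
      Finset.sum_mul]
    refine Finset.sum_congr rfl fun a _ => ?_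
    rw [Finset.mul_sum, Finset.sum_mul, Finset.sum_mul]
    refine Finset.sum_congr rfl fun jj _ => ?_
    rw [Q.S_mul]
    simp only [mul_assoc]
  have stepC : Q.Econ c (Q.T2a (Q.comul v) * Q.phi) = v * Q.EL c := by
    rw [hm, map_sum, Finset.sum_mul, map_sum]
    simp only [T2a_tmul]
    calc ∑ i, Q.Econ c ((m1 i ⊗ₜ[k] Q.comul (m2 i)) * Q.phi)
        = ∑ i, Q.counit (m2 i) • (m1 i * Q.EL c) := by
          refine Finset.sum_congr rfl fun i _ => ?_
          obtain ⟨si, s1, s2, hs⟩ := QH.exists_fin_rep (Q.comul (m2 i))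
          rw [hs, hX, tmul_sum, Finset.sum_mul_sum, map_sum]
          simp only [map_sum, Algebra.TensorProduct.tmul_mul_tmul, Econ_tmul]
          rw [Finset.sum_comm]
          calc ∑ a, ∑ jj, m1 i * X1 a * c * (Q.S (s1 jj * X2 a) * Q.alpha * (s2 jj * X3 a))
              = ∑ a, ∑ jj, m1 i * (X1 a * (c * (Q.S (X2 a)
                  * (Q.S (s1 jj) * (Q.alpha * (s2 jj * X3 a)))))) := by
                refine Finset.sum_congr rfl fun a _ => ?_
                refine Finset.sum_congr rfl fun jj _ => ?_
                rw [Q.S_mul]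
                simp only [mul_assoc]
            _ = ∑ a, m1 i * (X1 a * (c * (Q.S (X2 a)
                  * (∑ jj, Q.S (s1 jj) * (Q.alpha * (s2 jj * X3 a)))))) := by
                refine Finset.sum_congr rfl fun a _ => ?_
                simp only [← Finset.mul_sum]
            _ = ∑ a, m1 i * (X1 a * (c * (Q.S (X2 a)
                  * (Q.counit (m2 i) • (Q.alpha * X3 a))))) := by
                refine Finset.sum_congr rfl fun a _ => ?_
                rw [Q.antipode_left_collect (m2 i) si s1 s2 hs (X3 a)]
            _ = Q.counit (m2 i) • (m1 i * Q.EL c) := by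
                rw [Q.EL_rep nX X1 X2 X3 hX c, Finset.mul_sum, Finset.smul_sum]
                refine Finset.sum_congr rfl fun a _ => ?_
                simp only [mul_smul_comm, mul_assoc]
      _ = (∑ i, Q.counit (m2 i) • m1 i) * Q.EL c := by
          rw [Finset.sum_mul]
          refine Finset.sum_congr rfl fun i _ => ?_
          rw [smul_mul_assoc]
      _ = v * Q.EL c := by rw [Q.counit_right_rep v n m1 m2 hm]
  rw [stepA, ← hT, stepC]

end QuasiHopf
end StmtAux4

section StmtAux5
set_option maxHeartbeats 2000000
set_option synthInstance.maxHeartbeats 400000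
open TensorProduct
namespace QuasiHopf
variable {k H : Type} [Field k] [Ring H] [Algebra k H] (Q : QuasiHopf k H)

/-- `gzMap c (u ⊗ v) = u * c * S v * α` -/
noncomputable def gzMap (c : H) : H ⊗[k] H →ₗ[k] H :=
  (LinearMap.mulRight k Q.alpha) ∘ₗ Q.adl c

@[simp] lemma gzMap_tmul (c u v : H) :
    Q.gzMap c (u ⊗ₜ[k] v) = u * c * Q.S v * Q.alpha := rfl

/-- `gMain b b' (u ⊗ v) = E(u ▷ b) * E(v ▷ b')` -/
noncomputable def gMain (b b' : H) : H ⊗[k] H →ₗ[k] H :=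
  (LinearMap.mul' k H) ∘ₗ (TensorProduct.map (Q.EL ∘ₗ Q.act b) (Q.EL ∘ₗ Q.act b'))

@[simp] lemma gMain_tmul (b b' u v : H) :
    Q.gMain b b' (u ⊗ₜ[k] v) = Q.EL (Q.act b u) * Q.EL (Q.act b' v) := rfl


lemma mul4_sum {ι : Type} (s : Finset ι) (x : H ⊗[k] (H ⊗[k] (H ⊗[k] H)))
    (f : ι → H ⊗[k] (H ⊗[k] (H ⊗[k] H))) :
    x * ∑ i ∈ s, f i = ∑ i ∈ s, x * f i := by
  classical
  induction s using Finset.cons_induction with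
  | empty =>
      rw [Finset.sum_empty, Finset.sum_empty]
      exact (inferInstance : MulZeroClass (H ⊗[k] (H ⊗[k] (H ⊗[k] H)))).mul_zero x
  | cons a s ha ih =>
      rw [Finset.sum_cons, Finset.sum_cons,
        (inferInstance : Distrib (H ⊗[k] (H ⊗[k] (H ⊗[k] H)))).left_distrib, ih]

lemma sum4_mul {ι : Type} (s : Finset ι) (x : H ⊗[k] (H ⊗[k] (H ⊗[k] H)))
    (f : ι → H ⊗[k] (H ⊗[k] (H ⊗[k] H))) :
    (∑ i ∈ s, f i) * x = ∑ i ∈ s, f i * x := by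
  classical
  induction s using Finset.cons_induction with
  | empty =>
      rw [Finset.sum_empty, Finset.sum_empty]
      exact (inferInstance : MulZeroClass (H ⊗[k] (H ⊗[k] (H ⊗[k] H)))).zero_mul x
  | cons a s ha ih =>
      rw [Finset.sum_cons, Finset.sum_cons,
        (inferInstance : Distrib (H ⊗[k] (H ⊗[k] (H ⊗[k] H)))).right_distrib, ih]

lemma P3a_phi_rep (nX : ℕ) (X1 X2 X3 : Fin nX → H)
    (hX : Q.phi = ∑ i, X1 i ⊗ₜ[k] (X2 i ⊗ₜ[k] X3 i)) :
    Q.P3a Q.phi = ∑ i, X1 i ⊗ₜ[k] (X2 i ⊗ₜ[k] Q.comul (X3 i)) := by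
  rw [hX, map_sum]
  rfl

/-- Absorption of `(id ⊗ id ⊗ Δ)(φ)` under the contraction `Gam g`. -/
lemma gam_P3 (nX : ℕ) (X1 X2 X3 : Fin nX → H)
    (hX : Q.phi = ∑ i, X1 i ⊗ₜ[k] (X2 i ⊗ₜ[k] X3 i))
    (g : H ⊗[k] H →ₗ[k] H) (A : H ⊗[k] (H ⊗[k] (H ⊗[k] H))) :
    Q.Gam g (A * Q.P3a Q.phi) = Q.Gam g A := by
  have hzero : (0 : H ⊗[k] (H ⊗[k] (H ⊗[k] H))) * Q.P3a Q.phi = 0 :=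
    (inferInstance : MulZeroClass (H ⊗[k] (H ⊗[k] (H ⊗[k] H)))).zero_mul _
  have hadd : ∀ x y : H ⊗[k] (H ⊗[k] (H ⊗[k] H)),
      (x + y) * Q.P3a Q.phi = x * Q.P3a Q.phi + y * Q.P3a Q.phi := fun x y =>
    (inferInstance : Distrib (H ⊗[k] (H ⊗[k] (H ⊗[k] H)))).right_distrib x y _
  induction A with
  | zero => rw [hzero, map_zero]
  | add x y hxx hyy => rw [hadd, map_add, hxx, hyy, map_add]
  | tmul u s =>
    induction s with
    | zero => rw [tmul_zero, hzero, map_zero]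
    | add x y hxx hyy => rw [tmul_add, hadd, map_add, hxx, hyy, map_add]
    | tmul v r =>
      induction r with
      | zero => rw [tmul_zero, tmul_zero, hzero, map_zero]
      | add x y hxx hyy =>
          rw [tmul_add, tmul_add, hadd, map_add, hxx, hyy, map_add]
      | tmul w t =>
        have hms : (u ⊗ₜ[k] (v ⊗ₜ[k] (w ⊗ₜ[k] t)))
            * (∑ i, X1 i ⊗ₜ[k] (X2 i ⊗ₜ[k] Q.comul (X3 i)))
            = ∑ i, (u ⊗ₜ[k] (v ⊗ₜ[k] (w ⊗ₜ[k] t)))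
                * (X1 i ⊗ₜ[k] (X2 i ⊗ₜ[k] Q.comul (X3 i))) :=
          mul4_sum _ _ _
        rw [Q.P3a_phi_rep nX X1 X2 X3 hX, hms, map_sum]
        calc ∑ i, Q.Gam g ((u ⊗ₜ[k] (v ⊗ₜ[k] (w ⊗ₜ[k] t)))
                * (X1 i ⊗ₜ[k] (X2 i ⊗ₜ[k] Q.comul (X3 i))))
            = ∑ i, Q.counit (X3 i)
                • (g ((u ⊗ₜ[k] v) * (X1 i ⊗ₜ[k] X2 i)) * (w * (Q.beta * Q.S t))) := by
              refine Finset.sum_congr rfl fun i _ => ?_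
              obtain ⟨ri, r1, r2, hri⟩ := QH.exists_fin_rep (Q.comul (X3 i))
              rw [hri, tmul_sum, tmul_sum, mul4_sum, map_sum]
              simp only [Algebra.TensorProduct.tmul_mul_tmul, Gam_tmul, Q.S_mul]
              simp only [mul_assoc]
              simp only [← Finset.mul_sum]
              rw [Q.antipode_right_collect (X3 i) ri r1 r2 hri (Q.S t)]
              simp only [mul_smul_comm]
          _ = Q.Gam g (u ⊗ₜ[k] (v ⊗ₜ[k] (w ⊗ₜ[k] t))) := by
              have hmap : ∀ z : H ⊗[k] H,
                  g ((u ⊗ₜ[k] v) * z) * (w * (Q.beta * Q.S t))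
                    = ((LinearMap.mulRight k (w * (Q.beta * Q.S t))) ∘ₗ g ∘ₗ
                        (LinearMap.mulLeft k (u ⊗ₜ[k] v))) z := fun z => rfl
              calc ∑ i, Q.counit (X3 i)
                  • (g ((u ⊗ₜ[k] v) * (X1 i ⊗ₜ[k] X2 i)) * (w * (Q.beta * Q.S t)))
                  = ∑ i, ((LinearMap.mulRight k (w * (Q.beta * Q.S t))) ∘ₗ g ∘ₗ
                        (LinearMap.mulLeft k (u ⊗ₜ[k] v)))
                      (Q.counit (X3 i) • (X1 i ⊗ₜ[k] X2 i)) := by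
                    refine Finset.sum_congr rfl fun i _ => ?_
                    rw [map_smul, ← hmap]
                _ = ((LinearMap.mulRight k (w * (Q.beta * Q.S t))) ∘ₗ g ∘ₗ
                        (LinearMap.mulLeft k (u ⊗ₜ[k] v)))
                      (∑ i, Q.counit (X3 i) • (X1 i ⊗ₜ[k] X2 i)) := by
                    rw [map_sum]
                _ = g ((u ⊗ₜ[k] v) * 1) * (w * (Q.beta * Q.S t)) := by
                    rw [Q.C3rep nX X1 X2 X3 hX]
                    exact (hmap 1).symm
                _ = Q.Gam g (u ⊗ₜ[k] (v ⊗ₜ[k] (w ⊗ₜ[k] t))) := by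
                    rw [mul_one (M := H ⊗[k] H), Gam_tmul, mul_assoc w Q.beta (Q.S t)]

end QuasiHopf
end StmtAux5

section StmtAux6
set_option maxHeartbeats 2000000
set_option synthInstance.maxHeartbeats 400000
open TensorProduct
namespace QuasiHopf
variable {k H : Type} [Field k] [Ring H] [Algebra k H] (Q : QuasiHopf k H)

lemma gam_P2iL (nx : ℕ) (x1 x2 x3 : Fin nx → H)
    (hx : Q.phiInv = ∑ i, x1 i ⊗ₜ[k] (x2 i ⊗ₜ[k] x3 i)) (g : H ⊗[k] H →ₗ[k] H) :
    Q.Gam g (Q.P2a Q.phiInv * Q.iLa Q.phiInv)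
      = ∑ j, Q.Gam g (x1 j ⊗ₜ[k] (Q.Dmap (x2 j ⊗ₜ[k] x3 j) * Q.phiInv)) := by
  have h1 : Q.P2a Q.phiInv = ∑ j, x1 j ⊗ₜ[k] Q.Dmap (x2 j ⊗ₜ[k] x3 j) := by
    rw [hx, map_sum]; rfl
  have h2 : Q.iLa Q.phiInv = (1 : H) ⊗ₜ[k] Q.phiInv := rfl
  rw [h1, h2, sum4_mul, map_sum]
  refine Finset.sum_congr rfl fun j _ => ?_
  rw [Algebra.TensorProduct.tmul_mul_tmul, mul_one]

lemma gam_perj (nx : ℕ) (x1 x2 x3 : Fin nx → H)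
    (hx : Q.phiInv = ∑ i, x1 i ⊗ₜ[k] (x2 i ⊗ₜ[k] x3 i))
    (g : H ⊗[k] H →ₗ[k] H) (u v w : H) (nj : ℕ) (m1 m2 : Fin nj → H)
    (hm : Q.comul v = ∑ i, m1 i ⊗ₜ[k] m2 i) :
    Q.Gam g (u ⊗ₜ[k] (Q.Dmap (v ⊗ₜ[k] w) * Q.phiInv))
      = ∑ mm, ∑ j', g (u ⊗ₜ[k] (m1 mm * x1 j'))
          * (m2 mm * x2 j' * Q.beta * Q.S (w * x3 j')) := by
  rw [Q.Dmap_rep v w nj m1 m2 hm, hx, Finset.sum_mul_sum]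
  simp only [Algebra.TensorProduct.tmul_mul_tmul]
  simp only [tmul_sum, map_sum, Gam_tmul]

lemma zfinal (nx : ℕ) (x1 x2 x3 : Fin nx → H)
    (hx : Q.phiInv = ∑ i, x1 i ⊗ₜ[k] (x2 i ⊗ₜ[k] x3 i)) (c : H) :
    Q.Gam (Q.gzMap c) (Q.P2a Q.phiInv * Q.iLa Q.phiInv) = c := by
  rw [Q.gam_P2iL nx x1 x2 x3 hx]
  have hperj : ∀ j, Q.Gam (Q.gzMap c) (x1 j ⊗ₜ[k] (Q.Dmap (x2 j ⊗ₜ[k] x3 j) * Q.phiInv))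
      = ∑ j', Q.counit (x2 j) • (x1 j * (c * (Q.S (x1 j') * (Q.alpha
          * (x2 j' * (Q.beta * (Q.S (x3 j') * Q.S (x3 j)))))))) := by
    intro j
    obtain ⟨nj, m1, m2, hm⟩ := QH.exists_fin_rep (Q.comul (x2 j))
    rw [Q.gam_perj nx x1 x2 x3 hx (Q.gzMap c) (x1 j) (x2 j) (x3 j) nj m1 m2 hm,
      Finset.sum_comm]
    refine Finset.sum_congr rfl fun j' _ => ?_
    calc ∑ mm, Q.gzMap c (x1 j ⊗ₜ[k] (m1 mm * x1 j'))
            * (m2 mm * x2 j' * Q.beta * Q.S (x3 j * x3 j'))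
        = ∑ mm, x1 j * (c * (Q.S (x1 j') * (Q.S (m1 mm) * (Q.alpha
            * (m2 mm * (x2 j' * (Q.beta * (Q.S (x3 j') * Q.S (x3 j))))))))) := by
          refine Finset.sum_congr rfl fun mm _ => ?_
          rw [gzMap_tmul, Q.S_mul (m1 mm) (x1 j'), Q.S_mul (x3 j) (x3 j')]
          simp only [mul_assoc]
      _ = x1 j * (c * (Q.S (x1 j') * (∑ mm, Q.S (m1 mm) * (Q.alpha
            * (m2 mm * (x2 j' * (Q.beta * (Q.S (x3 j') * Q.S (x3 j))))))))) := by
          simp only [← Finset.mul_sum]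
      _ = Q.counit (x2 j) • (x1 j * (c * (Q.S (x1 j') * (Q.alpha
            * (x2 j' * (Q.beta * (Q.S (x3 j') * Q.S (x3 j)))))))) := by
          rw [Q.antipode_left_collect (x2 j) nj m1 m2 hm
            (x2 j' * (Q.beta * (Q.S (x3 j') * Q.S (x3 j))))]
          simp only [mul_smul_comm]
  calc ∑ j, Q.Gam (Q.gzMap c) (x1 j ⊗ₜ[k] (Q.Dmap (x2 j ⊗ₜ[k] x3 j) * Q.phiInv))
      = ∑ j, ∑ j', Q.counit (x2 j) • (x1 j * (c * (Q.S (x1 j') * (Q.alpha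
          * (x2 j' * (Q.beta * (Q.S (x3 j') * Q.S (x3 j)))))))) :=
        Finset.sum_congr rfl fun j _ => hperj j
    _ = ∑ j', ∑ j, Q.counit (x2 j) • (x1 j * (c * (Q.S (x1 j') * (Q.alpha
          * (x2 j' * (Q.beta * (Q.S (x3 j') * Q.S (x3 j)))))))) := Finset.sum_comm
    _ = ∑ j', c * (Q.S (x1 j') * (Q.alpha * (x2 j' * (Q.beta * Q.S (x3 j'))))) := by
        refine Finset.sum_congr rfl fun j' _ => ?_
        have hterm : ∀ j, x1 j * (c * (Q.S (x1 j') * (Q.alpha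
            * (x2 j' * (Q.beta * (Q.S (x3 j') * Q.S (x3 j)))))))
            = Q.adl (c * (Q.S (x1 j') * (Q.alpha * (x2 j' * (Q.beta * Q.S (x3 j'))))))
                (x1 j ⊗ₜ[k] x3 j) := by
          intro j
          rw [adl_tmul]
          simp only [mul_assoc]
        calc ∑ j, Q.counit (x2 j) • (x1 j * (c * (Q.S (x1 j') * (Q.alpha
              * (x2 j' * (Q.beta * (Q.S (x3 j') * Q.S (x3 j))))))))
            = ∑ j, Q.adl (c * (Q.S (x1 j') * (Q.alpha * (x2 j' * (Q.beta * Q.S (x3 j'))))))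
                (Q.counit (x2 j) • (x1 j ⊗ₜ[k] x3 j)) := by
              refine Finset.sum_congr rfl fun j _ => ?_
              rw [map_smul, hterm j]
          _ = Q.adl (c * (Q.S (x1 j') * (Q.alpha * (x2 j' * (Q.beta * Q.S (x3 j'))))))
                (∑ j, Q.counit (x2 j) • (x1 j ⊗ₜ[k] x3 j)) := by rw [map_sum]
          _ = c * (Q.S (x1 j') * (Q.alpha * (x2 j' * (Q.beta * Q.S (x3 j'))))) := by
              rw [Q.C1rep nx x1 x2 x3 hx, Algebra.TensorProduct.one_def, adl_tmul,
                one_mul, Q.S_one, mul_one]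
    _ = c * ∑ j', Q.S (x1 j') * (Q.alpha * (x2 j' * (Q.beta * Q.S (x3 j')))) := by
        rw [Finset.mul_sum]
    _ = c := by
        have h1 : ∑ j', Q.S (x1 j') * (Q.alpha * (x2 j' * (Q.beta * Q.S (x3 j'))))
            = ∑ j', Q.S (x1 j') * Q.alpha * x2 j' * Q.beta * Q.S (x3 j') := by
          refine Finset.sum_congr rfl fun j' _ => ?_
          simp only [mul_assoc]
        rw [h1, Q.antipode_phiInv nx x1 x2 x3 hx, mul_one]

lemma gam_key (nX : ℕ) (X1 X2 X3 : Fin nX → H)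
    (hX : Q.phi = ∑ i, X1 i ⊗ₜ[k] (X2 i ⊗ₜ[k] X3 i)) (g : H ⊗[k] H →ₗ[k] H) :
    Q.Gam g (Q.i3a Q.phi * Q.P1a Q.phiInv)
      = Q.Gam g (Q.P2a Q.phiInv * Q.iLa Q.phiInv) := by
  have hassoc : Q.P2a Q.phiInv * (Q.iLa Q.phiInv * Q.P3a Q.phi)
      = (Q.P2a Q.phiInv * Q.iLa Q.phiInv) * Q.P3a Q.phi := by
    exact (mul_assoc (Q.P2a Q.phiInv) (Q.iLa Q.phiInv) (Q.P3a Q.phi)).symm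
  rw [Q.key4, hassoc, Q.gam_P3 nX X1 X2 X3 hX]

lemma U_rep (nX : ℕ) (X1 X2 X3 : Fin nX → H)
    (hX : Q.phi = ∑ i, X1 i ⊗ₜ[k] (X2 i ⊗ₜ[k] X3 i))
    (nx : ℕ) (x1 x2 x3 : Fin nx → H)
    (hx : Q.phiInv = ∑ i, x1 i ⊗ₜ[k] (x2 i ⊗ₜ[k] x3 i))
    (m : ℕ) (p11 p12 : Fin nx → Fin m → H)
    (hp1 : ∀ j, Q.comul (x1 j) = ∑ jj, p11 j jj ⊗ₜ[k] p12 j jj) :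
    Q.i3a Q.phi * Q.P1a Q.phiInv
      = ∑ i, ∑ j, ∑ jj, (X1 i * p11 j jj) ⊗ₜ[k] ((X2 i * p12 j jj)
          ⊗ₜ[k] ((X3 i * x2 j) ⊗ₜ[k] x3 j)) := by
  have h1 : Q.i3a Q.phi = ∑ i, X1 i ⊗ₜ[k] (X2 i ⊗ₜ[k] (X3 i ⊗ₜ[k] (1 : H))) := by
    rw [hX, map_sum]; rfl
  have h2 : Q.P1a Q.phiInv
      = ∑ j, ∑ jj, p11 j jj ⊗ₜ[k] (p12 j jj ⊗ₜ[k] (x2 j ⊗ₜ[k] x3 j)) := by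
    rw [hx, map_sum]
    refine Finset.sum_congr rfl fun j _ => ?_
    show (Algebra.TensorProduct.assoc k k k H H (H ⊗[k] H))
        (Q.comul (x1 j) ⊗ₜ[k] (x2 j ⊗ₜ[k] x3 j)) = _
    rw [hp1 j, sum_tmul, map_sum]
    simp only [Algebra.TensorProduct.assoc_tmul]
  rw [h1, h2, sum4_mul]
  refine Finset.sum_congr rfl fun i _ => ?_
  rw [mul4_sum]
  refine Finset.sum_congr rfl fun j _ => ?_
  rw [mul4_sum]
  refine Finset.sum_congr rfl fun jj _ => ?_
  simp only [Algebra.TensorProduct.tmul_mul_tmul, one_mul]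

lemma gamU (nX : ℕ) (X1 X2 X3 : Fin nX → H)
    (hX : Q.phi = ∑ i, X1 i ⊗ₜ[k] (X2 i ⊗ₜ[k] X3 i))
    (nx : ℕ) (x1 x2 x3 : Fin nx → H)
    (hx : Q.phiInv = ∑ i, x1 i ⊗ₜ[k] (x2 i ⊗ₜ[k] x3 i))
    (m : ℕ) (p11 p12 : Fin nx → Fin m → H)
    (hp1 : ∀ j, Q.comul (x1 j) = ∑ jj, p11 j jj ⊗ₜ[k] p12 j jj)
    (g : H ⊗[k] H →ₗ[k] H) :
    Q.Gam g (Q.i3a Q.phi * Q.P1a Q.phiInv)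
      = ∑ i, ∑ j, ∑ jj, g ((X1 i * p11 j jj) ⊗ₜ[k] (X2 i * p12 j jj))
          * (X3 i * x2 j * Q.beta * Q.S (x3 j)) := by
  rw [Q.U_rep nX X1 X2 X3 hX nx x1 x2 x3 hx m p11 p12 hp1]
  simp only [map_sum, Gam_tmul]

lemma zlem (nX : ℕ) (X1 X2 X3 : Fin nX → H)
    (hX : Q.phi = ∑ i, X1 i ⊗ₜ[k] (X2 i ⊗ₜ[k] X3 i))
    (nx : ℕ) (x1 x2 x3 : Fin nx → H)
    (hx : Q.phiInv = ∑ i, x1 i ⊗ₜ[k] (x2 i ⊗ₜ[k] x3 i))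
    (m : ℕ) (p11 p12 : Fin nx → Fin m → H)
    (hp1 : ∀ j, Q.comul (x1 j) = ∑ jj, p11 j jj ⊗ₜ[k] p12 j jj)
    (c : H) :
    ∑ j, Q.EL (Q.act c (x1 j)) * (x2 j * Q.beta * Q.S (x3 j)) = c := by
  have key : Q.Gam (Q.gzMap c) (Q.i3a Q.phi * Q.P1a Q.phiInv) = c := by
    rw [Q.gam_key nX X1 X2 X3 hX, Q.zfinal nx x1 x2 x3 hx c]
  have hexp : ∑ j, Q.EL (Q.act c (x1 j)) * (x2 j * Q.beta * Q.S (x3 j))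
      = ∑ j, ∑ i, ∑ jj, Q.gzMap c ((X1 i * p11 j jj) ⊗ₜ[k] (X2 i * p12 j jj))
          * (X3 i * x2 j * Q.beta * Q.S (x3 j)) := by
    refine Finset.sum_congr rfl fun j _ => ?_
    rw [Q.EL_rep nX X1 X2 X3 hX (Q.act c (x1 j)), Finset.sum_mul]
    refine Finset.sum_congr rfl fun i _ => ?_
    rw [Q.act_rep c (x1 j) m (p11 j) (p12 j) (hp1 j), Finset.mul_sum, Finset.sum_mul,
      Finset.sum_mul]
    refine Finset.sum_congr rfl fun jj _ => ?_
    rw [gzMap_tmul, Q.S_mul (X2 i) (p12 j jj)]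
    simp only [mul_assoc]
  rw [hexp, Finset.sum_comm,
    ← Q.gamU nX X1 X2 X3 hX nx x1 x2 x3 hx m p11 p12 hp1 (Q.gzMap c)]
  exact key

lemma mainM (nX : ℕ) (X1 X2 X3 : Fin nX → H)
    (hX : Q.phi = ∑ i, X1 i ⊗ₜ[k] (X2 i ⊗ₜ[k] X3 i))
    (nx : ℕ) (x1 x2 x3 : Fin nx → H)
    (hx : Q.phiInv = ∑ i, x1 i ⊗ₜ[k] (x2 i ⊗ₜ[k] x3 i))
    (m : ℕ) (p11 p12 : Fin nx → Fin m → H)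
    (hp1 : ∀ j, Q.comul (x1 j) = ∑ jj, p11 j jj ⊗ₜ[k] p12 j jj)
    (b b' : H) :
    Q.Gam (Q.gMain b b') (Q.P2a Q.phiInv * Q.iLa Q.phiInv)
      = ∑ j, Q.EL (Q.act b (x1 j)) * (x2 j * (b' * Q.S (x3 j))) := by
  rw [Q.gam_P2iL nx x1 x2 x3 hx]
  refine Finset.sum_congr rfl fun j _ => ?_
  obtain ⟨nj, m1, m2, hm⟩ := QH.exists_fin_rep (Q.comul (x2 j))
  rw [Q.gam_perj nx x1 x2 x3 hx (Q.gMain b b') (x1 j) (x2 j) (x3 j) nj m1 m2 hm,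
    Finset.sum_comm]
  calc ∑ j', ∑ mm, Q.gMain b b' (x1 j ⊗ₜ[k] (m1 mm * x1 j'))
          * (m2 mm * x2 j' * Q.beta * Q.S (x3 j * x3 j'))
      = ∑ j', ∑ mm, Q.EL (Q.act b (x1 j))
          * ((Q.EL (Q.act (Q.act b' (x1 j')) (m1 mm)) * m2 mm)
            * (x2 j' * (Q.beta * (Q.S (x3 j') * Q.S (x3 j))))) := by
        refine Finset.sum_congr rfl fun j' _ => Finset.sum_congr rfl fun mm _ => ?_
        rw [gMain_tmul, Q.act_mul b' (m1 mm) (x1 j'), Q.S_mul (x3 j) (x3 j')]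
        simp only [mul_assoc]
    _ = ∑ j', Q.EL (Q.act b (x1 j))
          * ((∑ mm, Q.EL (Q.act (Q.act b' (x1 j')) (m1 mm)) * m2 mm)
            * (x2 j' * (Q.beta * (Q.S (x3 j') * Q.S (x3 j))))) := by
        refine Finset.sum_congr rfl fun j' _ => ?_
        rw [← Finset.mul_sum, ← Finset.sum_mul]
    _ = ∑ j', Q.EL (Q.act b (x1 j))
          * ((x2 j * Q.EL (Q.act b' (x1 j')))
            * (x2 j' * (Q.beta * (Q.S (x3 j') * Q.S (x3 j))))) := by
        refine Finset.sum_congr rfl fun j' _ => ?_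
        rw [Q.star_lemma nX X1 X2 X3 hX (Q.act b' (x1 j')) (x2 j) nj m1 m2 hm]
    _ = Q.EL (Q.act b (x1 j))
          * (x2 j * ((∑ j', Q.EL (Q.act b' (x1 j'))
              * (x2 j' * Q.beta * Q.S (x3 j'))) * Q.S (x3 j))) := by
        rw [Finset.sum_mul, Finset.mul_sum, Finset.mul_sum]
        refine Finset.sum_congr rfl fun j' _ => ?_
        simp only [mul_assoc]
    _ = Q.EL (Q.act b (x1 j)) * (x2 j * (b' * Q.S (x3 j))) := by
        rw [Q.zlem nX X1 X2 X3 hX nx x1 x2 x3 hx m p11 p12 hp1 b']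

lemma sum_reorder5 {α : Type} [AddCommMonoid α] {n1 n2 n3 n4 n5 : ℕ}
    (f : Fin n1 → Fin n2 → Fin n3 → Fin n4 → Fin n5 → α) :
    ∑ a, ∑ c, ∑ i, ∑ j, ∑ jj, f a c i j jj
      = ∑ i, ∑ j, ∑ jj, ∑ a, ∑ c, f a c i j jj := by
  calc ∑ a, ∑ c, ∑ i, ∑ j, ∑ jj, f a c i j jj
      = ∑ a, ∑ i, ∑ c, ∑ j, ∑ jj, f a c i j jj :=
        Finset.sum_congr rfl fun a _ => Finset.sum_comm
    _ = ∑ a, ∑ i, ∑ j, ∑ c, ∑ jj, f a c i j jj :=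
        Finset.sum_congr rfl fun a _ => Finset.sum_congr rfl fun i _ => Finset.sum_comm
    _ = ∑ a, ∑ i, ∑ j, ∑ jj, ∑ c, f a c i j jj :=
        Finset.sum_congr rfl fun a _ => Finset.sum_congr rfl fun i _ =>
          Finset.sum_congr rfl fun j _ => Finset.sum_comm
    _ = ∑ i, ∑ a, ∑ j, ∑ jj, ∑ c, f a c i j jj := Finset.sum_comm
    _ = ∑ i, ∑ j, ∑ a, ∑ jj, ∑ c, f a c i j jj :=
        Finset.sum_congr rfl fun i _ => Finset.sum_comm
    _ = ∑ i, ∑ j, ∑ jj, ∑ a, ∑ c, f a c i j jj :=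
        Finset.sum_congr rfl fun i _ => Finset.sum_congr rfl fun j _ => Finset.sum_comm

end QuasiHopf
end StmtAux6
/-- identification of the reconstructed transmuted multiplication with its
closed formula:
`Q¹(X¹p¹₁ ▷ b) S(Q²) q¹(X²p¹₂ ▷ b′) S(q²) X³p² = q¹(x¹ ▷ b) S(q²) x²b′S(x³)`,
where `q = X¹ ⊗ S⁻¹(αX³)X²`, `p = x¹ ⊗ x²βS(x³)`, `Q¹ ⊗ Q²` is a second copy of `q`, `▷`
is the left adjoint action, and `Δ(p¹) = p¹₁ ⊗ p¹₂`. -/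
theorem stmt3 {k H : Type} [Field k] [Ring H] [Algebra k H] (Q : QuasiHopf k H)
    (ad : H → H → H)
    (had : ∀ (c b : H) (n : ℕ) (c1 c2 : Fin n → H),
      Q.comul c = ∑ i, c1 i ⊗ₜ[k] c2 i → ad c b = ∑ i, c1 i * b * Q.S (c2 i))
    (b b' : H)
    (nX : ℕ) (X1 X2 X3 : Fin nX → H)
    (hX : Q.phi = ∑ i, X1 i ⊗ₜ[k] (X2 i ⊗ₜ[k] X3 i))
    (nx : ℕ) (x1 x2 x3 : Fin nx → H)
    (hx : Q.phiInv = ∑ i, x1 i ⊗ₜ[k] (x2 i ⊗ₜ[k] x3 i))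
    (m : ℕ) (p11 p12 : Fin nx → Fin m → H)
    (hp1 : ∀ j, Q.comul (x1 j) = ∑ jj, p11 j jj ⊗ₜ[k] p12 j jj) :
    ∑ a, ∑ c, ∑ i, ∑ j, ∑ jj,
      X1 a * ad (X1 i * p11 j jj) b * Q.S (Q.Sinv (Q.alpha * X3 a) * X2 a)
        * (X1 c * ad (X2 i * p12 j jj) b' * Q.S (Q.Sinv (Q.alpha * X3 c) * X2 c))
        * (X3 i * (x2 j * Q.beta * Q.S (x3 j)))
    = ∑ c, ∑ j,
        X1 c * ad (x1 j) b * Q.S (Q.Sinv (Q.alpha * X3 c) * X2 c)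
          * (x2 j * b' * Q.S (x3 j)) := by
  have had' : ∀ u c : H, ad u c = Q.act c u := fun u c => by
    obtain ⟨n, f, g, h⟩ := QH.exists_fin_rep (Q.comul u)
    rw [had u c n f g h, Q.act_rep c u n f g h]
  have hSS : ∀ aa cc : H, Q.S (Q.Sinv (Q.alpha * aa) * cc) = Q.S cc * (Q.alpha * aa) :=
    fun aa cc => by rw [Q.S_mul, Q.S_Sinv]
  simp only [had', hSS]
  rw [QuasiHopf.sum_reorder5]
  calc ∑ i, ∑ j, ∑ jj, ∑ a, ∑ c,
        X1 a * Q.act b (X1 i * p11 j jj) * (Q.S (X2 a) * (Q.alpha * X3 a))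
          * (X1 c * Q.act b' (X2 i * p12 j jj) * (Q.S (X2 c) * (Q.alpha * X3 c)))
          * (X3 i * (x2 j * Q.beta * Q.S (x3 j)))
      = ∑ i, ∑ j, ∑ jj, Q.gMain b b' ((X1 i * p11 j jj) ⊗ₜ[k] (X2 i * p12 j jj))
          * (X3 i * x2 j * Q.beta * Q.S (x3 j)) := by
        refine Finset.sum_congr rfl fun i _ => Finset.sum_congr rfl fun j _ =>
          Finset.sum_congr rfl fun jj _ => ?_
        refine Eq.symm ?_
        rw [Q.gMain_tmul, Q.EL_rep nX X1 X2 X3 hX (Q.act b (X1 i * p11 j jj)),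
          Q.EL_rep nX X1 X2 X3 hX (Q.act b' (X2 i * p12 j jj)),
          Finset.sum_mul, Finset.sum_mul]
        refine Finset.sum_congr rfl fun a _ => ?_
        rw [Finset.mul_sum, Finset.sum_mul]
        refine Finset.sum_congr rfl fun c _ => ?_
        simp only [mul_assoc]
    _ = Q.Gam (Q.gMain b b') (Q.i3a Q.phi * Q.P1a Q.phiInv) :=
        (Q.gamU nX X1 X2 X3 hX nx x1 x2 x3 hx m p11 p12 hp1 (Q.gMain b b')).symm
    _ = Q.Gam (Q.gMain b b') (Q.P2a Q.phiInv * Q.iLa Q.phiInv) :=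
        Q.gam_key nX X1 X2 X3 hX (Q.gMain b b')
    _ = ∑ j, Q.EL (Q.act b (x1 j)) * (x2 j * (b' * Q.S (x3 j))) :=
        Q.mainM nX X1 X2 X3 hX nx x1 x2 x3 hx m p11 p12 hp1 b b'
    _ = ∑ c, ∑ j, X1 c * Q.act b (x1 j) * (Q.S (X2 c) * (Q.alpha * X3 c))
          * (x2 j * b' * Q.S (x3 j)) := by
        rw [Finset.sum_comm]
        refine Finset.sum_congr rfl fun j _ => ?_
        rw [Q.EL_rep nX X1 X2 X3 hX (Q.act b (x1 j)), Finset.sum_mul]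
        refine Finset.sum_congr rfl fun c _ => ?_
        simp only [mul_assoc]
end

section
/- The transmuted product is a morphism of left H-modules for the adjoint action: for all h, b, b′ ∈ H, h▷(b ·̲ b′) = (h₁▷b) ·̲ (h₂▷b′). -/
open scoped TensorProduct
open TensorProduct

namespace QH

variable {k H : Type} [Field k] [Ring H] [Algebra k H]

theorem decomp2 (t : H ⊗[k] H) : ∃ n, ∃ f g : Fin n → H, t = ∑ i, f i ⊗ₜ[k] g i := by
  induction t with
  | zero => exact ⟨0, ![], ![], by simp⟩
  | tmul x y => exact ⟨1, ![x], ![y], by simp⟩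
  | add t1 t2 ih1 ih2 =>
    obtain ⟨n, f, g, rfl⟩ := ih1
    obtain ⟨m, f', g', rfl⟩ := ih2
    refine ⟨n + m, Fin.append f f', Fin.append g g', ?_⟩
    rw [Fin.sum_univ_add]
    simp [Fin.append_left, Fin.append_right]

theorem decomp3 (t : H ⊗[k] (H ⊗[k] H)) :
    ∃ n, ∃ f g h : Fin n → H, t = ∑ i, f i ⊗ₜ[k] (g i ⊗ₜ[k] h i) := by
  induction t with
  | zero => exact ⟨0, ![], ![], ![], by simp⟩
  | tmul x y =>
    obtain ⟨n, g, h, rfl⟩ := decomp2 y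
    exact ⟨n, fun _ => x, g, h, by rw [tmul_sum]⟩
  | add t1 t2 ih1 ih2 =>
    obtain ⟨n, f, g, h, rfl⟩ := ih1
    obtain ⟨m, f', g', h', rfl⟩ := ih2
    refine ⟨n + m, Fin.append f f', Fin.append g g', Fin.append h h', ?_⟩
    rw [Fin.sum_univ_add]
    simp [Fin.append_left, Fin.append_right]

/-- `adM Q b (x ⊗ y) = x * b * S y`. -/
noncomputable def adM (Q : QuasiHopf k H) (b : H) : H ⊗[k] H →ₗ[k] H :=
  TensorProduct.lift <| LinearMap.mk₂ k (fun x y => x * b * Q.S y)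
    (fun x x' y => by simp [add_mul])
    (fun c x y => by simp [smul_mul_assoc])
    (fun x y y' => by simp [mul_add])
    (fun c x y => by simp [mul_smul_comm])

@[simp] theorem adM_tmul (Q : QuasiHopf k H) (b x y : H) :
    adM Q b (x ⊗ₜ[k] y) = x * b * Q.S y := rfl

/-- `Xi Q (x ⊗ y) = S x * α * y`. -/
noncomputable def Xi (Q : QuasiHopf k H) : H ⊗[k] H →ₗ[k] H :=
  TensorProduct.lift <| LinearMap.mk₂ k (fun x y => Q.S x * Q.alpha * y)
    (fun x x' y => by simp [add_mul])
    (fun c x y => by simp [smul_mul_assoc])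
    (fun x y y' => by simp [mul_add])
    (fun c x y => by simp [mul_smul_comm])

@[simp] theorem Xi_tmul (Q : QuasiHopf k H) (x y : H) :
    Xi Q (x ⊗ₜ[k] y) = Q.S x * Q.alpha * y := rfl

theorem adM_tmul_mul (Q : QuasiHopf k H) (b x y : H) (t : H ⊗[k] H) :
    adM Q b ((x ⊗ₜ[k] y) * t) = x * adM Q b t * Q.S y := by
  obtain ⟨n, f, g, rfl⟩ := decomp2 t
  rw [Finset.mul_sum]
  simp only [map_sum, Algebra.TensorProduct.tmul_mul_tmul, adM_tmul, Q.S_mul,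
    Finset.mul_sum, Finset.sum_mul]
  exact Finset.sum_congr rfl fun i _ => by simp [mul_assoc]

theorem counit_sum (Q : QuasiHopf k H) (g : H) (n : ℕ) (g1 g2 : Fin n → H)
    (hg : Q.comul g = ∑ j, g1 j ⊗ₜ[k] g2 j) :
    ∑ j, Q.counit (g2 j) • g1 j = g := by
  have := Q.counit_right g
  rw [hg] at this
  simpa [TensorProduct.map_tmul, TensorProduct.rid_tmul] using this

theorem Xi_comul_mul (Q : QuasiHopf k H) (g : H) (t : H ⊗[k] H) :
    Xi Q (Q.comul g * t) = Q.counit g • Xi Q t := by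
  obtain ⟨n, g1, g2, hg⟩ := decomp2 (Q.comul g)
  obtain ⟨m, u, v, rfl⟩ := decomp2 t
  have hα := Q.antipode_left g n g1 g2 hg
  have key : ∀ i, ∑ j, Q.S (g1 j * u i) * Q.alpha * (g2 j * v i)
      = Q.counit g • (Q.S (u i) * Q.alpha * v i) := by
    intro i
    have h1 : ∑ j, Q.S (g1 j * u i) * Q.alpha * (g2 j * v i)
        = Q.S (u i) * (∑ j, Q.S (g1 j) * Q.alpha * g2 j) * v i := by
      rw [Finset.mul_sum, Finset.sum_mul]
      exact Finset.sum_congr rfl fun j _ => by simp [Q.S_mul, mul_assoc]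
    rw [h1, hα, mul_smul_comm, smul_mul_assoc]
  rw [hg, Finset.sum_mul]
  simp only [Finset.mul_sum, Algebra.TensorProduct.tmul_mul_tmul, map_sum, Xi_tmul]
  rw [Finset.sum_comm]
  simp only [key]
  rw [← Finset.smul_sum]

theorem adM_comul_mul (Q : QuasiHopf k H) (u v b : H) :
    adM Q b (Q.comul (u * v)) = adM Q (adM Q b (Q.comul v)) (Q.comul u) := by
  obtain ⟨n, u1, u2, hu⟩ := decomp2 (Q.comul u)
  obtain ⟨m, v1, v2, hv⟩ := decomp2 (Q.comul v)
  rw [map_mul, hu, hv, Finset.sum_mul]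
  simp only [Finset.mul_sum, Algebra.TensorProduct.tmul_mul_tmul, map_sum, adM_tmul, Q.S_mul]
  refine Finset.sum_congr rfl fun j _ => ?_
  rw [Finset.sum_mul]
  exact Finset.sum_congr rfl fun i _ => by simp [mul_assoc]

/-- `Theta Q c (u ⊗ t) = (u * c) * Xi Q t`. -/
noncomputable def Theta (Q : QuasiHopf k H) (c : H) : H ⊗[k] (H ⊗[k] H) →ₗ[k] H :=
  LinearMap.mul' k H ∘ₗ TensorProduct.map (LinearMap.mulRight k c) (Xi Q)

@[simp] theorem Theta_tmul (Q : QuasiHopf k H) (c u : H) (t : H ⊗[k] H) :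
    Theta Q c (u ⊗ₜ[k] t) = u * c * Xi Q t := by
  simp [Theta]

/-- `Wmap Q b X1 sA u = ∑ a, X1 a * (adM Q b (comul u) * sA a)`. -/
noncomputable def Wmap (Q : QuasiHopf k H) (b : H) {nX : ℕ} (X1 sA : Fin nX → H) :
    H →ₗ[k] H :=
  ∑ a, LinearMap.mulLeft k (X1 a) ∘ₗ LinearMap.mulRight k (sA a) ∘ₗ
    adM Q b ∘ₗ Q.comul.toLinearMap

theorem Wmap_apply (Q : QuasiHopf k H) (b : H) {nX : ℕ} (X1 sA : Fin nX → H) (u : H) :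
    Wmap Q b X1 sA u = ∑ a, X1 a * (adM Q b (Q.comul u) * sA a) := by
  simp [Wmap, LinearMap.sum_apply]

noncomputable def Lam (Q : QuasiHopf k H) (b b' : H) {nX : ℕ} (X1 sA : Fin nX → H) :
    H ⊗[k] (H ⊗[k] H) →ₗ[k] H :=
  LinearMap.mul' k H ∘ₗ TensorProduct.map (Wmap Q b X1 sA) (adM Q b')

@[simp] theorem Lam_tmul (Q : QuasiHopf k H) (b b' : H) {nX : ℕ} (X1 sA : Fin nX → H)
    (u : H) (t : H ⊗[k] H) :
    Lam Q b b' X1 sA (u ⊗ₜ[k] t) = Wmap Q b X1 sA u * adM Q b' t := by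
  simp [Lam]

theorem coassoc' (Q : QuasiHopf k H) (h : H) :
    Q.phi * (TensorProduct.assoc k H H H)
        ((TensorProduct.map Q.comul.toLinearMap LinearMap.id) (Q.comul h))
      = (TensorProduct.map LinearMap.id Q.comul.toLinearMap) (Q.comul h) * Q.phi := by
  rw [Q.quasi_coassoc h, mul_assoc, Q.inv_phi, mul_one]

theorem coassoc'' (Q : QuasiHopf k H) (h : H) :
    Q.phiInv * (TensorProduct.map LinearMap.id Q.comul.toLinearMap) (Q.comul h)
      = (TensorProduct.assoc k H H H)
          ((TensorProduct.map Q.comul.toLinearMap LinearMap.id) (Q.comul h)) * Q.phiInv := by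
  rw [Q.quasi_coassoc h, ← mul_assoc, ← mul_assoc, Q.inv_phi, one_mul]

theorem Theta_phi_assoc (Q : QuasiHopf k H) {nX : ℕ} (X1 X2 X3 : Fin nX → H)
    (hphi : Q.phi = ∑ a, X1 a ⊗ₜ[k] (X2 a ⊗ₜ[k] X3 a)) (c' u w : H) :
    Theta Q c' (Q.phi * (TensorProduct.assoc k H H H) ((Q.comul u) ⊗ₜ[k] w))
      = ∑ a, X1 a * (adM Q c' (Q.comul u) * (Q.S (X2 a) * Q.alpha * X3 a)) * w := by
  obtain ⟨m, u1, u2, hu⟩ := decomp2 (Q.comul u)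
  rw [hphi, hu, sum_tmul]
  simp only [map_sum, assoc_tmul, Finset.sum_mul, Finset.mul_sum,
    Algebra.TensorProduct.tmul_mul_tmul, Theta_tmul, Xi_tmul, adM_tmul, Q.S_mul]
  rw [Finset.sum_comm]
  exact Finset.sum_congr rfl fun a _ => Finset.sum_congr rfl fun j _ => by simp [mul_assoc]

theorem claimQ (Q : QuasiHopf k H) {nX : ℕ} (X1 X2 X3 : Fin nX → H)
    (hphi : Q.phi = ∑ a, X1 a ⊗ₜ[k] (X2 a ⊗ₜ[k] X3 a)) (c' g : H) (n : ℕ)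
    (g1 g2 : Fin n → H) (hg : Q.comul g = ∑ j, g1 j ⊗ₜ[k] g2 j) :
    ∑ j, ∑ a, X1 a * (adM Q c' (Q.comul (g1 j)) * (Q.S (X2 a) * Q.alpha * X3 a)) * g2 j
      = g * ∑ a, X1 a * (c' * (Q.S (X2 a) * Q.alpha * X3 a)) := by
  have h2 : (TensorProduct.map Q.comul.toLinearMap LinearMap.id) (Q.comul g)
      = ∑ j, (Q.comul (g1 j)) ⊗ₜ[k] g2 j := by
    rw [hg, map_sum]; simp
  have step1 : ∑ j, ∑ a,
        X1 a * (adM Q c' (Q.comul (g1 j)) * (Q.S (X2 a) * Q.alpha * X3 a)) * g2 j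
      = Theta Q c' (Q.phi *
          (TensorProduct.assoc k H H H)
            ((TensorProduct.map Q.comul.toLinearMap LinearMap.id) (Q.comul g))) := by
    rw [h2, map_sum, Finset.mul_sum, map_sum]
    exact Finset.sum_congr rfl fun j _ => (Theta_phi_assoc Q X1 X2 X3 hphi c' (g1 j) (g2 j)).symm
  rw [step1, coassoc']
  conv_rhs => rw [← counit_sum Q g n g1 g2 hg]
  rw [hg, hphi]
  simp only [map_sum, TensorProduct.map_tmul, LinearMap.id_coe, id_eq,
    AlgHom.toLinearMap_apply, Finset.sum_mul, Finset.mul_sum,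
    Algebra.TensorProduct.tmul_mul_tmul, Theta_tmul, Xi_comul_mul, Xi_tmul]
  exact Finset.sum_congr rfl fun j _ => Finset.sum_congr rfl fun a _ => by
    simp [mul_assoc, mul_smul_comm, smul_mul_assoc]

theorem stepD (Q : QuasiHopf k H) (b b' : H) {nX : ℕ} (X1 sA : Fin nX → H)
    {nx : ℕ} (x1 x2 x3 : Fin nx → H)
    (hinv : Q.phiInv = ∑ i, x1 i ⊗ₜ[k] (x2 i ⊗ₜ[k] x3 i)) (h : H) (n : ℕ)
    (h1 h2 : Fin n → H) (hh : Q.comul h = ∑ j, h1 j ⊗ₜ[k] h2 j) :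
    Lam Q b b' X1 sA
        (Q.phiInv * (TensorProduct.map LinearMap.id Q.comul.toLinearMap) (Q.comul h))
      = ∑ j, ∑ i, ∑ a, X1 a * (adM Q b (Q.comul (x1 i * h1 j)) * sA a)
          * (x2 i * adM Q b' (Q.comul (h2 j)) * Q.S (x3 i)) := by
  rw [hh, hinv]
  simp only [map_sum, TensorProduct.map_tmul, LinearMap.id_coe, id_eq,
    AlgHom.toLinearMap_apply, Finset.mul_sum, Finset.sum_mul,
    Algebra.TensorProduct.tmul_mul_tmul, Lam_tmul]
  refine Finset.sum_congr rfl fun j _ => Finset.sum_congr rfl fun i _ => ?_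
  rw [adM_tmul_mul, Wmap_apply, Finset.sum_mul]

theorem stepE1 (Q : QuasiHopf k H) (b b' : H) {nX : ℕ} (X1 X2 X3 : Fin nX → H)
    (hphi : Q.phi = ∑ a, X1 a ⊗ₜ[k] (X2 a ⊗ₜ[k] X3 a))
    {nx : ℕ} (x1 x2 x3 : Fin nx → H)
    (hinv : Q.phiInv = ∑ i, x1 i ⊗ₜ[k] (x2 i ⊗ₜ[k] x3 i)) (g c : H) :
    Lam Q b b' X1 (fun a => Q.S (X2 a) * Q.alpha * X3 a)
        ((TensorProduct.assoc k H H H) ((Q.comul g) ⊗ₜ[k] c) * Q.phiInv)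
      = g * (∑ i, (∑ a, X1 a * (adM Q b (Q.comul (x1 i)) * (Q.S (X2 a) * Q.alpha * X3 a)))
          * (x2 i * b' * Q.S (x3 i))) * Q.S c := by
  obtain ⟨m, g1, g2, hg⟩ := decomp2 (Q.comul g)
  have key : ∀ i : Fin nx,
      ∑ j, ∑ a, X1 a * (adM Q (adM Q b (Q.comul (x1 i))) (Q.comul (g1 j))
          * (Q.S (X2 a) * Q.alpha * X3 a)) * g2 j
        = g * ∑ a, X1 a * (adM Q b (Q.comul (x1 i)) * (Q.S (X2 a) * Q.alpha * X3 a)) :=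
    fun i => claimQ Q X1 X2 X3 hphi (adM Q b (Q.comul (x1 i))) g m g1 g2 hg
  trans ∑ i, ∑ j, Wmap Q b X1 (fun a => Q.S (X2 a) * Q.alpha * X3 a) (g1 j * x1 i)
      * (g2 j * x2 i * b' * Q.S (c * x3 i))
  · rw [hg, hinv, sum_tmul]
    simp only [map_sum, assoc_tmul, Finset.mul_sum, Finset.sum_mul,
      Algebra.TensorProduct.tmul_mul_tmul, Lam_tmul, adM_tmul]
  · rw [Finset.mul_sum, Finset.sum_mul]
    refine Finset.sum_congr rfl fun i _ => ?_
    calc ∑ j, Wmap Q b X1 (fun a => Q.S (X2 a) * Q.alpha * X3 a) (g1 j * x1 i)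
          * (g2 j * x2 i * b' * Q.S (c * x3 i))
        = ∑ j, (Wmap Q b X1 (fun a => Q.S (X2 a) * Q.alpha * X3 a) (g1 j * x1 i) * g2 j)
            * (x2 i * (b' * (Q.S (x3 i) * Q.S c))) := by
          refine Finset.sum_congr rfl fun j _ => ?_
          rw [Q.S_mul]
          simp [mul_assoc]
      _ = (∑ j, ∑ a, X1 a * (adM Q (adM Q b (Q.comul (x1 i))) (Q.comul (g1 j))
            * (Q.S (X2 a) * Q.alpha * X3 a)) * g2 j)
            * (x2 i * (b' * (Q.S (x3 i) * Q.S c))) := by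
          rw [← Finset.sum_mul]
          congr 1
          refine Finset.sum_congr rfl fun j _ => ?_
          rw [Wmap_apply, adM_comul_mul, Finset.sum_mul]
      _ = (g * ∑ a, X1 a * (adM Q b (Q.comul (x1 i)) * (Q.S (X2 a) * Q.alpha * X3 a)))
            * (x2 i * (b' * (Q.S (x3 i) * Q.S c))) := by rw [key i]
      _ = g * ((∑ a, X1 a * (adM Q b (Q.comul (x1 i)) * (Q.S (X2 a) * Q.alpha * X3 a)))
            * (x2 i * b' * Q.S (x3 i))) * Q.S c := by simp [mul_assoc]

end QH


/-- the transmuted product `b ·̲ b′ = q¹(x¹▷b)S(q²)x²b′S(x³)` is a morphism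
of left `H`-modules for the adjoint action: `h ▷ (b ·̲ b′) = (h₁ ▷ b) ·̲ (h₂ ▷ b′)`. -/
theorem stmt4 {k H : Type} [Field k] [Ring H] [Algebra k H] (Q : QuasiHopf k H)
    (ad : H → H → H)
    (had : ∀ (c b : H) (n : ℕ) (c1 c2 : Fin n → H),
      Q.comul c = ∑ i, c1 i ⊗ₜ[k] c2 i → ad c b = ∑ i, c1 i * b * Q.S (c2 i))
    (mulU : H → H → H)
    (hmulU : ∀ (b b' : H) (nX : ℕ) (X1 X2 X3 : Fin nX → H) (nx : ℕ) (x1 x2 x3 : Fin nx → H),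
      Q.phi = ∑ c, X1 c ⊗ₜ[k] (X2 c ⊗ₜ[k] X3 c) →
      Q.phiInv = ∑ i, x1 i ⊗ₜ[k] (x2 i ⊗ₜ[k] x3 i) →
      mulU b b' = ∑ c, ∑ i,
        X1 c * ad (x1 i) b * Q.S (Q.Sinv (Q.alpha * X3 c) * X2 c)
          * (x2 i * b' * Q.S (x3 i)))
    (h b b' : H) (n : ℕ) (h1 h2 : Fin n → H)
    (hh : Q.comul h = ∑ j, h1 j ⊗ₜ[k] h2 j) :
    ad h (mulU b b') = ∑ j, mulU (ad (h1 j) b) (ad (h2 j) b') := by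

  obtain ⟨nX, X1, X2, X3, hphi⟩ := QH.decomp3 Q.phi
  obtain ⟨nx, x1, x2, x3, hinv⟩ := QH.decomp3 Q.phiInv
  have ad_eq : ∀ c b0 : H, ad c b0 = QH.adM Q b0 (Q.comul c) := by
    intro c b0
    obtain ⟨m, c1, c2, hc⟩ := QH.decomp2 (Q.comul c)
    rw [had c b0 m c1 c2 hc, hc, map_sum]
    simp
  have hS' : ∀ a, Q.S (Q.Sinv (Q.alpha * X3 a) * X2 a) = Q.S (X2 a) * Q.alpha * X3 a := by
    intro a
    rw [Q.S_mul, Q.S_Sinv, mul_assoc]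
  have hmul : mulU b b'
      = ∑ i, (∑ a, X1 a * (QH.adM Q b (Q.comul (x1 i)) * (Q.S (X2 a) * Q.alpha * X3 a)))
          * (x2 i * b' * Q.S (x3 i)) := by
    rw [hmulU b b' nX X1 X2 X3 nx x1 x2 x3 hphi hinv, Finset.sum_comm]
    refine Finset.sum_congr rfl fun i _ => ?_
    rw [Finset.sum_mul]
    refine Finset.sum_congr rfl fun a _ => ?_
    rw [hS' a, ad_eq]
    simp [mul_assoc]
  have hR : ∀ j, mulU (ad (h1 j) b) (ad (h2 j) b')
      = ∑ i, ∑ a, X1 a * (QH.adM Q b (Q.comul (x1 i * h1 j)) * (Q.S (X2 a) * Q.alpha * X3 a))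
          * (x2 i * QH.adM Q b' (Q.comul (h2 j)) * Q.S (x3 i)) := by
    intro j
    rw [hmulU _ _ nX X1 X2 X3 nx x1 x2 x3 hphi hinv, Finset.sum_comm]
    refine Finset.sum_congr rfl fun i _ => Finset.sum_congr rfl fun a _ => ?_
    rw [hS' a, ad_eq (x1 i), ad_eq (h1 j), ← QH.adM_comul_mul, ad_eq (h2 j)]
    simp [mul_assoc]
  have expand : QH.Lam Q b b' X1 (fun a => Q.S (X2 a) * Q.alpha * X3 a)
        ((TensorProduct.assoc k H H H)
          ((TensorProduct.map Q.comul.toLinearMap LinearMap.id) (Q.comul h)) * Q.phiInv)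
      = ∑ j, QH.Lam Q b b' X1 (fun a => Q.S (X2 a) * Q.alpha * X3 a)
          ((TensorProduct.assoc k H H H) ((Q.comul (h1 j)) ⊗ₜ[k] h2 j) * Q.phiInv) := by
    rw [hh]
    simp only [map_sum, TensorProduct.map_tmul, LinearMap.id_coe, id_eq,
      AlgHom.toLinearMap_apply, Finset.sum_mul]
  calc ad h (mulU b b')
      = ∑ j, h1 j * mulU b b' * Q.S (h2 j) := had h (mulU b b') n h1 h2 hh
    _ = ∑ j, QH.Lam Q b b' X1 (fun a => Q.S (X2 a) * Q.alpha * X3 a)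
          ((TensorProduct.assoc k H H H) ((Q.comul (h1 j)) ⊗ₜ[k] h2 j) * Q.phiInv) := by
        refine Finset.sum_congr rfl fun j _ => ?_
        rw [hmul]
        exact (QH.stepE1 Q b b' X1 X2 X3 hphi x1 x2 x3 hinv (h1 j) (h2 j)).symm
    _ = QH.Lam Q b b' X1 (fun a => Q.S (X2 a) * Q.alpha * X3 a)
          ((TensorProduct.assoc k H H H)
            ((TensorProduct.map Q.comul.toLinearMap LinearMap.id) (Q.comul h)) * Q.phiInv) :=
        expand.symm
    _ = QH.Lam Q b b' X1 (fun a => Q.S (X2 a) * Q.alpha * X3 a)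
          (Q.phiInv * (TensorProduct.map LinearMap.id Q.comul.toLinearMap) (Q.comul h)) := by
        rw [QH.coassoc'']
    _ = ∑ j, ∑ i, ∑ a, X1 a * (QH.adM Q b (Q.comul (x1 i * h1 j))
            * (Q.S (X2 a) * Q.alpha * X3 a))
          * (x2 i * QH.adM Q b' (Q.comul (h2 j)) * Q.S (x3 i)) :=
        QH.stepD Q b b' X1 (fun a => Q.S (X2 a) * Q.alpha * X3 a) x1 x2 x3 hinv h n h1 h2 hh
    _ = ∑ j, mulU (ad (h1 j) b) (ad (h2 j) b') := by
        refine Finset.sum_congr rfl fun j _ => ?_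
        rw [hR j]
end

section
/- For all s, g, h, k ∈ G the 2-cocycle identity θ_s(g,h)·θ_s(gh,k) = θ_s(g,hk)·θ_{g⁻¹sg}(h,k) holds in kˣ. -/
/-- for a finite group `G` and a normalized 3-cocycle `φ` with values in
`kˣ`, the function `θ_s(g,h) = φ(g,g⁻¹sg,h)·φ(s,g,h)⁻¹·φ(g,h,h⁻¹g⁻¹sgh)⁻¹` satisfies
the 2-cocycle identity `θ_s(g,h)·θ_s(gh,K) = θ_s(g,hK)·θ_{g⁻¹sg}(h,K)`. -/
theorem stmt12 {G : Type} [Group G] [Fintype G] {k : Type} [Field k]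
    (φ : G → G → G → kˣ)
    (hcoc : ∀ a b c d : G,
      φ b c d * φ a (b * c) d * φ a b c = φ a b (c * d) * φ (a * b) c d)
    (hnorm : ∀ a b : G, φ a 1 b = 1)
    (θ : G → G → G → kˣ)
    (hθ : ∀ s g h : G,
      θ s g h = φ g (g⁻¹ * s * g) h * (φ s g h)⁻¹ * (φ g h (h⁻¹ * g⁻¹ * s * g * h))⁻¹)
    (s g h K : G) :
    θ s g h * θ s (g * h) K = θ s g (h * K) * θ (g⁻¹ * s * g) h K := by
  have E1 : (g*h)⁻¹ * s * (g*h) = h⁻¹ * g⁻¹ * s * g * h := by group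
  have E2 : K⁻¹ * (g*h)⁻¹ * s * (g*h) * K = K⁻¹ * h⁻¹ * g⁻¹ * s * g * h * K := by group
  have E3 : (h*K)⁻¹ * g⁻¹ * s * g * (h*K) = K⁻¹ * h⁻¹ * g⁻¹ * s * g * h * K := by group
  have E4 : h⁻¹ * (g⁻¹ * s * g) * h = h⁻¹ * g⁻¹ * s * g * h := by group
  have E5 : K⁻¹ * h⁻¹ * (g⁻¹ * s * g) * h * K = K⁻¹ * h⁻¹ * g⁻¹ * s * g * h * K := by group
  have E6 : g * (g⁻¹ * s * g) = s * g := by group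
  have E7 : (g⁻¹ * s * g) * h = g⁻¹ * s * g * h := by group
  have E8 : h * (h⁻¹ * g⁻¹ * s * g * h) = g⁻¹ * s * g * h := by group
  have E9 : (h⁻¹ * g⁻¹ * s * g * h) * K = h⁻¹ * g⁻¹ * s * g * h * K := by group
  have E10 : K * (K⁻¹ * h⁻¹ * g⁻¹ * s * g * h * K) = h⁻¹ * g⁻¹ * s * g * h * K := by group
  have h1 := hcoc s g h K
  have h2 := hcoc g (g⁻¹ * s * g) h K
  have h3 := hcoc g h (h⁻¹ * g⁻¹ * s * g * h) K
  have h4 := hcoc g h K (K⁻¹ * h⁻¹ * g⁻¹ * s * g * h * K)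
  rw [E6, E7] at h2
  rw [E8, E9] at h3
  rw [E10] at h4
  rw [hθ, hθ, hθ, hθ, E1, E2, E3, E4, E5]
  have key : (φ (g⁻¹*s*g) h K * φ g (g⁻¹*s*g*h) K * φ g (g⁻¹*s*g) h) *
      (φ h K (K⁻¹*h⁻¹*g⁻¹*s*g*h*K) * φ g (h*K) (K⁻¹*h⁻¹*g⁻¹*s*g*h*K) * φ g h K) *
      ((φ s g (h*K) * φ (s*g) h K) * (φ g h (h⁻¹*g⁻¹*s*g*h*K) * φ (g*h) (h⁻¹*g⁻¹*s*g*h) K)) =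
      (φ g (g⁻¹*s*g) (h*K) * φ (s*g) h K) *
      (φ g h (h⁻¹*g⁻¹*s*g*h*K) * φ (g*h) K (K⁻¹*h⁻¹*g⁻¹*s*g*h*K)) *
      ((φ g h K * φ s (g*h) K * φ s g h) * (φ h (h⁻¹*g⁻¹*s*g*h) K * φ g (g⁻¹*s*g*h) K * φ g h (h⁻¹*g⁻¹*s*g*h))) := by
    rw [h2, h4, ← h1, ← h3]
  rw [← mul_left_inj ((φ g (g⁻¹*s*g) (h*K) * φ (s*g) h K) *
      (φ g h (h⁻¹*g⁻¹*s*g*h*K) * φ (g*h) K (K⁻¹*h⁻¹*g⁻¹*s*g*h*K)) *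
      ((φ g h K * φ s (g*h) K * φ s g h) * (φ h (h⁻¹*g⁻¹*s*g*h) K * φ g (g⁻¹*s*g*h) K * φ g h (h⁻¹*g⁻¹*s*g*h))))]
  conv_rhs => rw [← key]
  -- now a pure identity in the commutative group kˣ
  rw [Units.ext_iff]
  push_cast
  field_simp
end

section
/- For all s, t, g, h ∈ G the compatibility identity θ_s(g,h)·θ_t(g,h)·γ_g(s,t)·γ_h(g⁻¹sg, g⁻¹tg) = θ_{st}(g,h)·γ_{gh}(s,t) holds in kˣ. -/
/-- for a finite group `G` and a normalized 3-cocycle `φ` with values in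
`kˣ`, the functions `θ` and `γ` satisfy the compatibility identity
`θ_s(g,h)·θ_t(g,h)·γ_g(s,t)·γ_h(g⁻¹sg, g⁻¹tg) = θ_{st}(g,h)·γ_{gh}(s,t)`. -/
theorem stmt13 {G : Type} [Group G] [Fintype G] {k : Type} [Field k]
    (φ : G → G → G → kˣ)
    (hcoc : ∀ a b c d : G,
      φ b c d * φ a (b * c) d * φ a b c = φ a b (c * d) * φ (a * b) c d)
    (hnorm : ∀ a b : G, φ a 1 b = 1)
    (θ : G → G → G → kˣ)
    (hθ : ∀ s g h : G,
      θ s g h = φ g (g⁻¹ * s * g) h * (φ s g h)⁻¹ * (φ g h (h⁻¹ * g⁻¹ * s * g * h))⁻¹)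
    (γ : G → G → G → kˣ)
    (hγ : ∀ g a b : G,
      γ g a b = φ a g (g⁻¹ * b * g) * (φ a b g)⁻¹ * (φ g (g⁻¹ * a * g) (g⁻¹ * b * g))⁻¹)
    (s t g h : G) :
    θ s g h * θ t g h * γ g s t * γ h (g⁻¹ * s * g) (g⁻¹ * t * g)
      = θ (s * t) g h * γ (g * h) s t := by
  have h1 := hcoc g (g⁻¹*s*g) (g⁻¹*t*g) h
  have h2 := hcoc g (g⁻¹*s*g) h (h⁻¹*g⁻¹*t*g*h)
  have h3 := hcoc g h (h⁻¹*g⁻¹*s*g*h) (h⁻¹*g⁻¹*t*g*h)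
  have h4 := hcoc s g (g⁻¹*t*g) h
  have h5 := hcoc s g h (h⁻¹*g⁻¹*t*g*h)
  have h6 := hcoc s t g h
  simp only [hθ, hγ]
  simp only [mul_assoc, mul_inv_rev, inv_mul_cancel_left, mul_inv_cancel_left, inv_inv,
    one_mul, mul_one] at h1 h2 h3 h4 h5 h6 ⊢
  have key : (φ (g⁻¹ * (s * g)) h (h⁻¹ * (g⁻¹ * (t * (g * h)))) * (φ g (g⁻¹ * (s * (g * h))) (h⁻¹ * (g⁻¹ * (t * (g * h)))) * φ g (g⁻¹ * (s * g)) h)) * (φ g (g⁻¹ * (t * g)) h * (φ s (t * g) h * φ s g (g⁻¹ * (t * g)))) * (φ g (g⁻¹ * (s * g)) (g⁻¹ * (t * (g * h))) * φ (s * g) (g⁻¹ * (t * g)) h) * (φ g h (h⁻¹ * (g⁻¹ * (s * (t * (g * h))))) * φ (g * h) (h⁻¹ * (g⁻¹ * (s * (g * h)))) (h⁻¹ * (g⁻¹ * (t * (g * h))))) * (φ s g (g⁻¹ * (t * (g * h))) * φ (s * g) h (h⁻¹ * (g⁻¹ * (t * (g * h))))) * (φ s t (g * h) * φ (s * t) g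 h) = (φ g (g⁻¹ * (s * g)) (g⁻¹ * (t * (g * h))) * φ (s * g) h (h⁻¹ * (g⁻¹ * (t * (g * h))))) * (φ s g (g⁻¹ * (t * (g * h))) * φ (s * g) (g⁻¹ * (t * g)) h) * (φ (g⁻¹ * (s * g)) (g⁻¹ * (t * g)) h * (φ g (g⁻¹ * (s * (t * g))) h * φ g (g⁻¹ * (s * g)) (g⁻¹ * (t * g)))) * (φ h (h⁻¹ * (g⁻¹ * (s * (g * h)))) (h⁻¹ * (g⁻¹ * (t * (g * h)))) * (φ g (g⁻¹ * (s * (g * h))) (h⁻¹ * (g⁻¹ * (t * (g * h)))) * φ g h (h⁻¹ * (g⁻¹ * (s * (g * h)))))) * (φ g h (h⁻¹ * (g⁻¹ * (t * (g * h)))) * (φ s (g * h) (h⁻¹ * (g⁻¹ * (t * (g * h)))) * φ s g h)) * (φ t g h * (φ s (t * g) h * φ s t g)) := by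
    rw [h2, h4, h1, h3, h5, h6]
  have main1 : (φ g (g⁻¹ * (s * g)) h * ((φ s g h)⁻¹ * ((φ g h (h⁻¹ * (g⁻¹ * (s * (g * h)))))⁻¹ * (φ g (g⁻¹ * (t * g)) h * ((φ t g h)⁻¹ * ((φ g h (h⁻¹ * (g⁻¹ * (t * (g * h)))))⁻¹ * (φ s g (g⁻¹ * (t * g)) * ((φ s t g)⁻¹ * ((φ g (g⁻¹ * (s * g)) (g⁻¹ * (t * g)))⁻¹ * (φ (g⁻¹ * (s * g)) h (h⁻¹ * (g⁻¹ * (t * (g * h)))) * ((φ (g⁻¹ * (s * g)) (g⁻¹ * (t * g)) h)⁻¹ * ((φ h (h⁻¹ * (g⁻¹ * (s * (g * h)))) (h⁻¹ * (g⁻¹ * (t * (g * h)))))⁻¹)))))))))))) * ((φ g (g⁻¹ * (s * g)) (g⁻¹ * (t * (g * h))) * φ (s * g) h (h⁻¹ * (g⁻¹ * (t * (g * h))))) * (φ s g (g⁻¹ * (t * (g * h))) * φ (s * g) (g⁻¹ * (t * g)) h) * (φ (g⁻¹ * (s * g)) (g⁻¹ * (t * g)) h * (φ g (g⁻¹ *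 (s * (t * g))) h * φ g (g⁻¹ * (s * g)) (g⁻¹ * (t * g)))) * (φ h (h⁻¹ * (g⁻¹ * (s * (g * h)))) (h⁻¹ * (g⁻¹ * (t * (g * h)))) * (φ g (g⁻¹ * (s * (g * h))) (h⁻¹ * (g⁻¹ * (t * (g * h)))) * φ g h (h⁻¹ * (g⁻¹ * (s * (g * h)))))) * (φ g h (h⁻¹ * (g⁻¹ * (t * (g * h)))) * (φ s (g * h) (h⁻¹ * (g⁻¹ * (t * (g * h)))) * φ s g h)) * (φ t g h * (φ s (t * g) h * φ s t g))) = (φ g (g⁻¹ * (s * (t * g))) h * ((φ (s * t) g h)⁻¹ * ((φ g h (h⁻¹ * (g⁻¹ * (s * (t * (g * h))))))⁻¹ * (φ s (g * h) (h⁻¹ * (g⁻¹ * (t * (g * h)))) * ((φ s t (g * h))⁻¹ * ((φ (g * h) (h⁻¹ * (g⁻¹ * (s * (g * h)))) (h⁻¹ * (g⁻¹ * (t * (g * h)))))⁻¹)))))) * ((φ (g⁻¹ * (s * g)) h (h⁻¹ * (g⁻¹ * (t * (g * h)))) * (φ g (g⁻¹ * (s * (g * h))) (h⁻¹ * (g⁻¹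 * (t * (g * h)))) * φ g (g⁻¹ * (s * g)) h)) * (φ g (g⁻¹ * (t * g)) h * (φ s (t * g) h * φ s g (g⁻¹ * (t * g)))) * (φ g (g⁻¹ * (s * g)) (g⁻¹ * (t * (g * h))) * φ (s * g) (g⁻¹ * (t * g)) h) * (φ g h (h⁻¹ * (g⁻¹ * (s * (t * (g * h))))) * φ (g * h) (h⁻¹ * (g⁻¹ * (s * (g * h)))) (h⁻¹ * (g⁻¹ * (t * (g * h))))) * (φ s g (g⁻¹ * (t * (g * h))) * φ (s * g) h (h⁻¹ * (g⁻¹ * (t * (g * h))))) * (φ s t (g * h) * φ (s * t) g h)) := by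
    apply Additive.ofMul.injective
    simp only [ofMul_mul, ofMul_inv]
    abel
  rw [key] at main1
  exact mul_right_cancel main1
end

section
/- Write the associator of D^φ(G) as φ_D = X¹⊗X²⊗X³ with inverse x¹⊗x²⊗x³, set q = q¹⊗q² = X¹⊗S⁻¹(αX³)X², and let ▷ denote the adjoint action x▷y = x₁yS(x₂). Then the transmuted product m̲(b⊗b′) = q¹(x¹▷b)S(q²)x²b′S(x³) of D^φ(G) satisfies, for all g, h, s, t ∈ G: m̲((g⊗δ_s)⊗(h⊗δ_t)) = δ_{s,gtg⁻¹}·θ_s(g,h)·φ(s, g⁻¹s⁻¹g, g⁻¹sg)·φ(sg⁻¹s⁻¹g, g⁻¹sg, h⁻¹g⁻¹s⁻¹gh)⁻¹·(gh⊗δ_s). -/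
/-- the transmuted product `m̲(b⊗b′) = q¹(x¹▷b)S(q²)x²b′S(x³)` of the
twisted quantum double `D^φ(G)` (with `q = X¹⊗S⁻¹(αX³)X²` built from the associator
`φ_D = Σ φ(g,h,k)·(e⊗δ_g)⊗(e⊗δ_h)⊗(e⊗δ_k)`, inverse associator
`Σ φ(g,h,k)⁻¹·(e⊗δ_g)⊗(e⊗δ_h)⊗(e⊗δ_k)`, `α = e⊗1`, and `▷` the adjoint action
determined by the coproduct `Δ(g⊗δ_s) = Σ_{ab=s} γ_g(a,b)·(g⊗δ_a)⊗(g⊗δ_b)`) satisfies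
`m̲((g⊗δ_s)⊗(h⊗δ_t)) = δ_{s,gtg⁻¹}·θ_s(g,h)·φ(s,g⁻¹s⁻¹g,g⁻¹sg)·
φ(sg⁻¹s⁻¹g,g⁻¹sg,h⁻¹g⁻¹s⁻¹gh)⁻¹·(gh⊗δ_s)`. -/
theorem stmt15 {G : Type} [Group G] [Fintype G] [DecidableEq G] {k : Type} [Field k]
    (φ : G → G → G → kˣ)
    (hcoc : ∀ a b c d : G,
      φ b c d * φ a (b * c) d * φ a b c = φ a b (c * d) * φ (a * b) c d)
    (hnorm : ∀ a b : G, φ a 1 b = 1)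
    (θ : G → G → G → kˣ)
    (hθ : ∀ s g h : G,
      θ s g h = φ g (g⁻¹ * s * g) h * (φ s g h)⁻¹ * (φ g h (h⁻¹ * g⁻¹ * s * g * h))⁻¹)
    (γ : G → G → G → kˣ)
    (hγ : ∀ g a b : G,
      γ g a b = φ a g (g⁻¹ * b * g) * (φ a b g)⁻¹ * (φ g (g⁻¹ * a * g) (g⁻¹ * b * g))⁻¹)
    (m : ((G × G) →₀ k) →ₗ[k] ((G × G) →₀ k) →ₗ[k] ((G × G) →₀ k))
    (hm : ∀ g s h t : G,
      m (Finsupp.single (g, s) 1) (Finsupp.single (h, t) 1)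
        = if s = g * t * g⁻¹ then (θ s g h : k) • Finsupp.single (g * h, s) (1 : k) else 0)
    (hmassoc : ∀ x y z : (G × G) →₀ k, m (m x y) z = m x (m y z))
    (Sl : ((G × G) →₀ k) →ₗ[k] ((G × G) →₀ k))
    (hS : ∀ g s : G,
      Sl (Finsupp.single (g, s) 1)
        = (((θ s⁻¹ g g⁻¹)⁻¹ * (γ g s s⁻¹)⁻¹ : kˣ) : k) • Finsupp.single (g⁻¹, s⁻¹) (1 : k))
    (Sinv : ((G × G) →₀ k) →ₗ[k] ((G × G) →₀ k))
    (hSSinv : ∀ x : (G × G) →₀ k, Sl (Sinv x) = x)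
    (hSinvS : ∀ x : (G × G) →₀ k, Sinv (Sl x) = x)
    (g s h t : G) :
    ∑ g1 : G, ∑ h1 : G, ∑ k1 : G, ∑ g2 : G, ∑ h2 : G, ∑ k2 : G, ∑ a : G, ∑ c : G,
      ((φ g1 h1 k1 : k) * (((φ g2 h2 k2)⁻¹ : kˣ) : k)
          * (if a * c = g2 then (γ 1 a c : k) else 0)) •
        m (m (m (m (m (Finsupp.single ((1 : G), g1) (1 : k))
                  (m (m (Finsupp.single ((1 : G), a) (1 : k)) (Finsupp.single (g, s) 1))
                    (Sl (Finsupp.single ((1 : G), c) 1))))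
                (Sl (m (Sinv (m (∑ u : G, Finsupp.single ((1 : G), u) (1 : k))
                        (Finsupp.single ((1 : G), k1) 1)))
                      (Finsupp.single ((1 : G), h1) 1))))
              (Finsupp.single ((1 : G), h2) 1))
            (Finsupp.single (h, t) 1))
          (Sl (Finsupp.single ((1 : G), k2) 1))
      = if s = g * t * g⁻¹ then
          ((θ s g h : k) * (φ s (g⁻¹ * s⁻¹ * g) (g⁻¹ * s * g) : k)
              * (((φ (s * g⁻¹ * s⁻¹ * g) (g⁻¹ * s * g) (h⁻¹ * g⁻¹ * s⁻¹ * g * h))⁻¹ : kˣ) : k))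
            • Finsupp.single (g * h, s) (1 : k)
        else 0 := by
  -- normalization consequences of the cocycle identity
  have hφ11 : ∀ d : G, φ 1 1 d = 1 := fun d => hnorm 1 d
  have hφ1 : ∀ b c : G, φ 1 b c = 1 := by
    intro b c
    have hh := hcoc 1 1 b c
    simp only [hφ11, one_mul, mul_one] at hh
    exact mul_left_cancel (a := φ 1 b c) (by rw [mul_one]; exact hh)
  have hφ3 : ∀ a b : G, φ a b 1 = 1 := by
    intro a b
    have hh := hcoc a b 1 1
    simp only [hnorm, one_mul, mul_one] at hh
    exact mul_left_cancel (a := φ a b 1) (by rw [mul_one]; exact hh)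
  have hθ1 : ∀ s h : G, θ s 1 h = 1 := by
    intro s h
    rw [hθ]
    simp [hφ1, hnorm]
  have hθ2 : ∀ s g : G, θ s g 1 = 1 := by
    intro s g
    rw [hθ]
    simp [hφ3, hnorm]
  have hγ0 : ∀ a b : G, γ 1 a b = 1 := by
    intro a b
    rw [hγ]
    simp [hφ1, hφ3, hnorm]
  -- scalar-form multiplication rule
  have hm' : ∀ g s h t : G,
      m (Finsupp.single (g, s) 1) (Finsupp.single (h, t) 1)
        = (if s = g * t * g⁻¹ then (θ s g h : k) else 0) • Finsupp.single (g * h, s) (1 : k) := by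
    intro g s h t
    rw [hm]
    split_ifs <;> simp
  -- antipode on group-like part
  have L3 : ∀ c : G, Sl (Finsupp.single ((1 : G), c) (1 : k))
      = Finsupp.single ((1 : G), c⁻¹) (1 : k) := by
    intro c
    rw [hS]
    simp [hθ1, hγ0]
  have L4 : ∀ c : G, Sinv (Finsupp.single ((1 : G), c) (1 : k))
      = Finsupp.single ((1 : G), c⁻¹) (1 : k) := by
    intro c
    have := hSinvS (Finsupp.single ((1 : G), c⁻¹) (1 : k))
    rw [L3, inv_inv] at this
    exact this
  have L0' : ∀ v : G, m (∑ u : G, Finsupp.single ((1 : G), u) (1 : k))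
      (Finsupp.single ((1 : G), v) (1 : k)) = Finsupp.single ((1 : G), v) (1 : k) := by
    intro v
    rw [map_sum m, LinearMap.sum_apply]
    simp [hm', hθ1, ite_smul, Finset.sum_ite_eq']
  have key : ∀ g1 h1 k1 g2 h2 k2 a c : G,
      ((φ g1 h1 k1 : k) * (((φ g2 h2 k2)⁻¹ : kˣ) : k)
          * (if a * c = g2 then (γ 1 a c : k) else 0)) •
        m (m (m (m (m (Finsupp.single ((1 : G), g1) (1 : k))
                  (m (m (Finsupp.single ((1 : G), a) (1 : k)) (Finsupp.single (g, s) 1))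
                    (Sl (Finsupp.single ((1 : G), c) 1))))
                (Sl (m (Sinv (m (∑ u : G, Finsupp.single ((1 : G), u) (1 : k))
                        (Finsupp.single ((1 : G), k1) 1)))
                      (Finsupp.single ((1 : G), h1) 1))))
              (Finsupp.single ((1 : G), h2) 1))
            (Finsupp.single (h, t) 1))
          (Sl (Finsupp.single ((1 : G), k2) 1))
      = if c = g⁻¹ * s⁻¹ * g ∧ a = s ∧ k2 = h⁻¹ * g⁻¹ * s⁻¹ * g * h ∧ h2 = g⁻¹ * s * g
            ∧ g2 = s * g⁻¹ * s⁻¹ * g ∧ k1 = g⁻¹ * s * g ∧ h1 = g⁻¹ * s⁻¹ * g ∧ g1 = s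
            ∧ s = g * t * g⁻¹ then
          ((θ s g h : k) * (φ s (g⁻¹ * s⁻¹ * g) (g⁻¹ * s * g) : k)
              * (((φ (s * g⁻¹ * s⁻¹ * g) (g⁻¹ * s * g) (h⁻¹ * g⁻¹ * s⁻¹ * g * h))⁻¹ : kˣ) : k))
            • Finsupp.single (g * h, s) (1 : k)
        else 0 := by
    intro g1 h1 k1 g2 h2 k2 a c
    simp only [L0', L4, L3, hm', map_smul, LinearMap.map_smul₂, LinearMap.smul_apply,
      smul_smul, hθ1, hθ2, hγ0, one_mul, mul_one, inv_one, inv_inv, Units.val_one]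
    by_cases ha : a = s
    · by_cases hc : c = g⁻¹ * s⁻¹ * g
      · by_cases hg1 : g1 = s
        · by_cases hk1 : k1 = g⁻¹ * s * g
          · by_cases hh1 : h1 = g⁻¹ * s⁻¹ * g
            · by_cases hg2 : g2 = s * g⁻¹ * s⁻¹ * g
              · by_cases hh2 : h2 = g⁻¹ * s * g
                · by_cases hk2 : k2 = h⁻¹ * g⁻¹ * s⁻¹ * g * h
                  · rw [ha, hc, hg1, hk1, hh1, hg2, hh2, hk2]
                    rw [if_pos (rfl : s = s),
                        if_pos (show s = g * (g⁻¹ * s⁻¹ * g)⁻¹ * g⁻¹ by group),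
                        if_pos (show (g⁻¹ * s * g)⁻¹ = g⁻¹ * s⁻¹ * g by group),
                        if_pos (show s * (g⁻¹ * s⁻¹ * g) = s * g⁻¹ * s⁻¹ * g by group),
                        if_pos (show s = g * (g⁻¹ * s * g) * g⁻¹ by group),
                        if_pos (show s = g * h * (h⁻¹ * g⁻¹ * s⁻¹ * g * h)⁻¹ * (g * h)⁻¹ by group)]
                    simp only [eq_self_iff_true, true_and, and_self]
                    split_ifs with hst
                    · congr 1
                      ring
                    · simp
                  · rw [if_neg (show ¬g1 = g * h * k2⁻¹ * (g * h)⁻¹ from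
                          fun hx => hk2 (by rw [hg1] at hx; rw [hx]; group))]
                    simp [hk2]
                · rw [if_neg (show ¬g1 = g * h2 * g⁻¹ from
                        fun hx => hh2 (by rw [hg1] at hx; rw [hx]; group))]
                  simp [hh2]
              · rw [if_neg (show ¬a * c = g2 from fun hx => hg2 (by rw [← hx, ha, hc]; group))]
                simp [hg2]
            · rw [if_neg (show ¬k1⁻¹ = h1 from fun hx => hh1 (by rw [← hx, hk1]; group))]
              simp [hh1]
          · rw [if_neg (show ¬g1 = g * k1 * g⁻¹ from
                  fun hx => hk1 (by rw [hg1] at hx; rw [hx]; group))]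
            simp [hk1]
        · rw [if_neg (show ¬g1 = a from fun hx => hg1 (hx.trans ha))]
          simp [hg1]
      · rw [if_neg (show ¬a = g * c⁻¹ * g⁻¹ from fun hx => hc (by rw [ha] at hx; rw [hx]; group))]
        simp [hc]
    · rw [if_neg ha]
      simp [ha]
  simp only [key, ite_and]
  simp only [Finset.sum_ite_eq', Finset.mem_univ, if_true, Finset.sum_const_zero]
end

section
/- Write the associator of k_φ(G) as φ_G = X¹⊗X²⊗X³ with inverse x¹⊗x²⊗x³, set q = q¹⊗q² = X¹⊗S⁻¹(αX³)X², and let ▷ denote the adjoint action h▷b = h₁bS(h₂) (where Δ(h) = h₁⊗h₂). Then the transmuted product b ·̲ b′ = q¹(x¹▷b)S(q²)x²b′S(x³) of k_φ(G) satisfies, for all s, t ∈ G: δ_s ·̲ δ_t = δ_{s,t}·φ(t,t⁻¹,t)·δ_t. -/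
set_option maxHeartbeats 1000000 in
/-- the transmuted product `b ·̲ b′ = q¹(x¹▷b)S(q²)x²b′S(x³)` of the
quasi-Hopf algebra `k_φ(G)` of functions on `G` (with pointwise product, associator
`φ_G = Σ φ(r,s,t)·δ_r⊗δ_s⊗δ_t` and inverse `Σ φ(r,s,t)⁻¹·δ_r⊗δ_s⊗δ_t`, antipode
`S(δ_t) = δ_{t⁻¹}` with `S⁻¹ = S`, `α = 1`, and adjoint action `▷` determined by the
coproduct `Δ(δ_t) = Σ_{ab=t} δ_a⊗δ_b`) satisfies `δ_s ·̲ δ_t = δ_{s,t}·φ(t,t⁻¹,t)·δ_t`. -/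
theorem stmt16 {G : Type} [Group G] [Fintype G] [DecidableEq G] {k : Type} [Field k]
    (φ : G → G → G → kˣ)
    (hcoc : ∀ a b c d : G,
      φ b c d * φ a (b * c) d * φ a b c = φ a b (c * d) * φ (a * b) c d)
    (hnorm : ∀ a b : G, φ a 1 b = 1)
    (dl : G → G → k)
    (hdl : ∀ t x : G, dl t x = if x = t then 1 else 0)
    (Sl : (G → k) →ₗ[k] (G → k))
    (hSl : ∀ t : G, Sl (dl t) = dl t⁻¹)
    (hSinv : ∀ x : G → k, Sl (Sl x) = x)
    (ad : (G → k) → (G → k) → (G → k))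
    (had : ∀ (r : G) (b : G → k),
      ad (dl r) b = ∑ a : G, ∑ c : G, if a * c = r then dl a * b * Sl (dl c) else 0)
    (s t : G) :
    ∑ r1 : G, ∑ s1 : G, ∑ t1 : G, ∑ r2 : G, ∑ s2 : G, ∑ t2 : G,
      ((φ r1 s1 t1 : k) * (((φ r2 s2 t2)⁻¹ : kˣ) : k)) •
        (dl r1 * ad (dl r2) (dl s) * Sl (Sl ((1 : G → k) * dl t1) * dl s1)
          * dl s2 * dl t * Sl (dl t2))
      = if s = t then (φ t t⁻¹ t : k) • dl t else 0 := by
  have hmul : ∀ a b : G, dl a * dl b = if a = b then dl a else 0 := by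
    intro a b
    funext x
    by_cases h : a = b
    · subst h
      simp only [Pi.mul_apply, hdl]
      split_ifs with hx <;> simp [hdl, hx]
    · simp only [Pi.mul_apply, hdl, Pi.zero_apply, if_neg h]
      by_cases hx : x = a <;> by_cases hy : x = b <;> simp_all
  have hone : ∀ a : G, φ 1 a a⁻¹ = 1 := by
    intro a
    have := hcoc 1 1 a a⁻¹
    simp only [one_mul, hnorm, mul_one] at this
    exact mul_right_cancel (this.trans (one_mul _).symm)
  have hads : ∀ r2 : G, ad (dl r2) (dl s) = if r2 = 1 then dl s else 0 := by
    intro r2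
    rw [had]
    have h1 : ∀ a c : G, (if a * c = r2 then dl a * dl s * Sl (dl c) else 0)
        = if a = s ∧ c = s⁻¹ ∧ r2 = 1 then dl s else 0 := by
      intro a c
      rw [hSl, hmul, ite_mul, zero_mul, hmul]
      split_ifs with h1 h2 h3 <;> try simp_all [inv_eq_iff_eq_inv]
    simp only [h1]
    by_cases hr : r2 = 1 <;>
      simp [hr, Finset.sum_ite_eq', ite_and]
  have hS2 : ∀ t1 s1 : G, Sl (Sl ((1 : G → k) * dl t1) * dl s1)
      = if t1⁻¹ = s1 then dl s1⁻¹ else 0 := by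
    intro t1 s1
    rw [one_mul, hSl, hmul]
    split_ifs with h
    · rw [hSl, h]
    · rw [map_zero]
  have key : ∀ r1 s1 t1 r2 s2 t2 : G,
      ((φ r1 s1 t1 : k) * (((φ r2 s2 t2)⁻¹ : kˣ) : k)) •
        (dl r1 * ad (dl r2) (dl s) * Sl (Sl ((1 : G → k) * dl t1) * dl s1)
          * dl s2 * dl t * Sl (dl t2))
      = if r1 = s ∧ s1 = s⁻¹ ∧ t1 = s ∧ r2 = 1 ∧ s2 = s ∧ t2 = t⁻¹ ∧ s = t then
          ((φ r1 s1 t1 : k) * (((φ r2 s2 t2)⁻¹ : kˣ) : k)) • dl t else 0 := by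
    intro r1 s1 t1 r2 s2 t2
    rw [hads, hS2, hSl]
    clear hcoc hnorm hdl hSinv had hads hS2 hSl hone
    simp only [mul_ite, mul_zero, ite_mul, zero_mul, hmul, smul_ite, smul_zero]
    split_ifs with h1 h2 h3 h4 h5 h6 h7 <;> try simp_all [inv_eq_iff_eq_inv]
  simp only [key]
  rw [Fintype.sum_eq_single s (fun b hb => by simp [hb]),
      Fintype.sum_eq_single s⁻¹ (fun b hb => by simp [hb]),
      Fintype.sum_eq_single s (fun b hb => by simp [hb]),
      Fintype.sum_eq_single (1 : G) (fun b hb => by simp [hb]),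
      Fintype.sum_eq_single s (fun b hb => by simp [hb]),
      Fintype.sum_eq_single t⁻¹ (fun b hb => by simp [hb])]
  by_cases hst : s = t
  · subst hst
    simp [hone]
  · simp [hst]
end
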